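/- arXiv:1304.6281 — 3 statements merged into one kernel-verified Lean document; each statement's English description precedes it below -/
import Mathlib

section
/- For real parameters μ, ν > 0 and β > 0, ∫_0^∞ x^{ν-1}·(x+β)^{ν-1}·e^{-μx} dx = (1/√π)·(β/μ)^{ν-1/2}·e^{βμ/2}·Γ(ν)·K_{1/2-ν}(βμ/2), where K is the modified Bessel function of the second kind. -/
open Real MeasureTheory Set
open scoped ENNReal

lemma cov {s : Set ℝ} {f f' : ℝ → ℝ} (hs : MeasurableSet s)
    (hf' : ∀ x ∈ s, HasDerivWithinAt f (f' x) s x) (hf : Set.InjOn f s) (g : ℝ → ℝ≥0∞) :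
    ∫⁻ x in f '' s, g x = ∫⁻ x in s, ENNReal.ofReal |f' x| * g (f x) := by
  simpa only [ContinuousLinearMap.det_toSpanSingleton] using
    MeasureTheory.lintegral_image_eq_lintegral_abs_det_fderiv_mul volume hs
      (fun x hx => (hf' x hx).hasFDerivWithinAt) hf g

lemma lint_gauss : ∫⁻ x : ℝ, ENNReal.ofReal (exp (-x^2)) = ENNReal.ofReal (Real.sqrt π) := by
  have hi : Integrable (fun x : ℝ => exp (-x^2)) := by
    simpa using integrable_exp_neg_mul_sq (one_pos)
  rw [← MeasureTheory.ofReal_integral_eq_lintegral_ofReal hi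
    (Filter.Eventually.of_forall fun x => (exp_pos _).le)]
  congr 1
  have := integral_gaussian 1
  simpa using this

-- image of s ↦ c/s
lemma image_div_Ioi {c : ℝ} (hc : 0 < c) : (fun s : ℝ => c / s) '' Ioi 0 = Ioi 0 := by
  ext y
  simp only [mem_image, mem_Ioi]
  constructor
  · rintro ⟨x, hx, rfl⟩; positivity
  · intro hy; exact ⟨c / y, by positivity, by field_simp⟩

lemma injOn_div {c : ℝ} (hc : 0 < c) : Set.InjOn (fun s : ℝ => c / s) (Ioi 0) := by
  intro a ha b hb h
  simp only [mem_Ioi] at ha hb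
  field_simp at h
  exact h.symm

-- the map g s = sqrt s - sqrt c / sqrt s
lemma image_gmap {c : ℝ} (hc : 0 < c) :
    (fun s : ℝ => Real.sqrt s - Real.sqrt c / Real.sqrt s) '' Ioi 0 = univ := by
  apply eq_univ_of_forall
  intro y
  simp only [mem_image, mem_Ioi]
  set D := Real.sqrt (y^2 + 4 * Real.sqrt c) with hD
  have hc' : 0 < Real.sqrt c := Real.sqrt_pos.mpr hc
  have hD2 : D^2 = y^2 + 4 * Real.sqrt c := Real.sq_sqrt (by positivity)
  have hDy : |y| < D := by
    rw [← Real.sqrt_sq_eq_abs]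
    exact Real.sqrt_lt_sqrt (by positivity) (by nlinarith)
  have ht : 0 < (y + D) / 2 := by
    rcases abs_lt.mp hDy with ⟨h1, _⟩
    linarith
  refine ⟨((y + D)/2)^2, by positivity, ?_⟩
  have hst : Real.sqrt (((y + D)/2)^2) = (y + D)/2 := Real.sqrt_sq ht.le
  rw [hst]
  have hyD : y + D ≠ 0 := by linarith [(abs_lt.mp hDy).1, neg_abs_le y]
  field_simp
  nlinarith

lemma injOn_gmap {c : ℝ} (hc : 0 < c) :
    Set.InjOn (fun s : ℝ => Real.sqrt s - Real.sqrt c / Real.sqrt s) (Ioi 0) := by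
  intro a ha b hb h
  simp only [mem_Ioi] at ha hb
  have ha' : 0 < Real.sqrt a := Real.sqrt_pos.mpr ha
  have hb' : 0 < Real.sqrt b := Real.sqrt_pos.mpr hb
  have hc' : 0 < Real.sqrt c := Real.sqrt_pos.mpr hc
  simp only at h
  have h2 : (Real.sqrt a - Real.sqrt b) * (Real.sqrt a * Real.sqrt b + Real.sqrt c) = 0 := by
    field_simp at h
    have h' : (Real.sqrt a ^ 2 - Real.sqrt c) * Real.sqrt b
        = (Real.sqrt b ^ 2 - Real.sqrt c) * Real.sqrt a := by
      linear_combination h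
    linear_combination h'
  have h3 : Real.sqrt a = Real.sqrt b := by
    rcases mul_eq_zero.mp h2 with h4 | h4
    · linarith
    · nlinarith
  have := Real.sq_sqrt ha.le
  have := Real.sq_sqrt hb.le
  nlinarith

lemma deriv_gmap {c : ℝ} (hc : 0 < c) {s : ℝ} (hs : s ∈ Ioi (0:ℝ)) :
    HasDerivWithinAt (fun s : ℝ => Real.sqrt s - Real.sqrt c / Real.sqrt s)
      (1 / (2 * Real.sqrt s) + Real.sqrt c / (2 * s * Real.sqrt s)) (Ioi 0) s := by
  simp only [mem_Ioi] at hs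
  have hs' : 0 < Real.sqrt s := Real.sqrt_pos.mpr hs
  have h1 : HasDerivAt Real.sqrt (1 / (2 * Real.sqrt s)) s := Real.hasDerivAt_sqrt hs.ne'
  have h2 : HasDerivAt (fun s : ℝ => Real.sqrt c / Real.sqrt s)
      ((0 * Real.sqrt s - Real.sqrt c * (1 / (2 * Real.sqrt s))) / (Real.sqrt s)^2) s :=
    (hasDerivAt_const s (Real.sqrt c)).div h1 hs'.ne'
  have h3 := h1.sub h2
  have hsq : (Real.sqrt s)^2 = s := Real.sq_sqrt hs.le
  refine h3.hasDerivWithinAt.congr_deriv ?_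
  rw [hsq]
  field_simp
  ring

lemma rpow_neg_half {s : ℝ} (hs : 0 < s) : s ^ (-(1:ℝ)/2) = 1 / Real.sqrt s := by
  rw [show -(1:ℝ)/2 = -(1/2) by ring, Real.rpow_neg hs.le, Real.sqrt_eq_rpow]
  exact (one_div _).symm

lemma rpow_neg_threehalf {s : ℝ} (hs : 0 < s) : s ^ (-(3:ℝ)/2) = 1 / (s * Real.sqrt s) := by
  rw [show -(3:ℝ)/2 = -(1 + 1/2) by ring, Real.rpow_neg hs.le,
    Real.rpow_add hs, Real.rpow_one, Real.sqrt_eq_rpow]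
  exact (one_div _).symm

lemma subord {a : ℝ} (ha : 0 < a) :
    ∫⁻ s in Ioi (0:ℝ), ENNReal.ofReal (s ^ (-(3:ℝ)/2) * exp (-s - a^2/(4*s))) =
      ENNReal.ofReal (2 * Real.sqrt π / a * exp (-a)) := by
  have hc : 0 < a^2/4 := by positivity
  set c := a^2/4 with hc_def
  have hsc : Real.sqrt c = a / 2 := by
    rw [hc_def, show a^2/4 = (a/2)^2 by ring, Real.sqrt_sq (by linarith)]
  have hscpos : 0 < Real.sqrt c := by rw [hsc]; linarith
  have harg : ∀ s : ℝ, a^2/(4*s) = c/s := fun s => by rw [hc_def]; ring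
  clear_value c
  simp_rw [harg]
  set T := ∫⁻ s in Ioi (0:ℝ), ENNReal.ofReal (s ^ (-(3:ℝ)/2) * exp (-s - c/s)) with hT
  -- Step 1 : J = √c • T
  have step1 : ∫⁻ s in Ioi (0:ℝ), ENNReal.ofReal (s ^ (-(1:ℝ)/2) * exp (-s - c/s)) =
      ENNReal.ofReal (Real.sqrt c) * T := by
    have hder : ∀ s ∈ Ioi (0:ℝ), HasDerivWithinAt (fun s : ℝ => c/s) (-(c/s^2)) (Ioi 0) s := by
      intro s hs
      simp only [mem_Ioi] at hs
      have h1 : HasDerivAt (fun s : ℝ => c/s) (-(c/s^2)) s := by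
        simpa [div_eq_mul_inv, mul_comm] using (hasDerivAt_inv hs.ne').const_mul c
      exact h1.hasDerivWithinAt
    have h0 := cov (f := fun s : ℝ => c/s) (f' := fun s => -(c/s^2)) measurableSet_Ioi hder
      (injOn_div hc) (fun y => ENNReal.ofReal (y ^ (-(1:ℝ)/2) * exp (-y - c/y)))
    rw [image_div_Ioi hc] at h0
    rw [h0, ← lintegral_const_mul' _ _ ENNReal.ofReal_ne_top]
    apply setLIntegral_congr_fun measurableSet_Ioi
    intro s hs
    beta_reduce
    simp only [mem_Ioi] at hs
    have hs' : 0 < Real.sqrt s := Real.sqrt_pos.mpr hs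
    have hcs : 0 < c/s := by positivity
    have hinv : c / (c / s) = s := by field_simp
    have hsd : Real.sqrt (c/s) = Real.sqrt c / Real.sqrt s := Real.sqrt_div hc.le s
    have hcc := Real.mul_self_sqrt hc.le
    have hss := Real.mul_self_sqrt hs.le
    rw [rpow_neg_half hcs, rpow_neg_threehalf hs, ← ENNReal.ofReal_mul (abs_nonneg _), ← ENNReal.ofReal_mul (Real.sqrt_nonneg c)]
    apply congrArg ENNReal.ofReal
    rw [hinv, abs_neg, abs_of_pos (by positivity : (0:ℝ) < c/s^2), hsd,
      show -(c/s) - s = -s - c/s by ring]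
    have key : c/s^2 * (1/(Real.sqrt c/Real.sqrt s)) = Real.sqrt c * (1/(s*Real.sqrt s)) := by
      field_simp
      linear_combination c*hss - s*hcc
    linear_combination (exp (-s - c/s)) * key
  -- Step 2 : Gaussian substitution
  have step2 : ENNReal.ofReal (Real.sqrt π) =
      ENNReal.ofReal (exp (2*Real.sqrt c)/2) *
        (∫⁻ s in Ioi (0:ℝ), ENNReal.ofReal (s ^ (-(1:ℝ)/2) * exp (-s - c/s)))
      + ENNReal.ofReal (exp (2*Real.sqrt c)/2 * Real.sqrt c) * T := by
    have h0 := cov (f := fun s : ℝ => Real.sqrt s - Real.sqrt c / Real.sqrt s)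
      (f' := fun s => 1 / (2 * Real.sqrt s) + Real.sqrt c / (2 * s * Real.sqrt s))
      measurableSet_Ioi (fun s hs => deriv_gmap hc hs) (injOn_gmap hc)
      (fun y => ENNReal.ofReal (exp (-y^2)))
    rw [image_gmap hc, Measure.restrict_univ, lint_gauss] at h0
    rw [h0]
    have hcong : ∀ s ∈ Ioi (0:ℝ),
        ENNReal.ofReal |1 / (2 * Real.sqrt s) + Real.sqrt c / (2 * s * Real.sqrt s)| *
          ENNReal.ofReal (exp (-(Real.sqrt s - Real.sqrt c / Real.sqrt s)^2)) =
        ENNReal.ofReal (exp (2*Real.sqrt c)/2) *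
          ENNReal.ofReal (s ^ (-(1:ℝ)/2) * exp (-s - c/s)) +
        ENNReal.ofReal (exp (2*Real.sqrt c)/2 * Real.sqrt c) *
          ENNReal.ofReal (s ^ (-(3:ℝ)/2) * exp (-s - c/s)) := by
      intro s hs
      simp only [mem_Ioi] at hs
      have hs' : 0 < Real.sqrt s := Real.sqrt_pos.mpr hs
      have hcc := Real.mul_self_sqrt hc.le
      have hss := Real.mul_self_sqrt hs.le
      have hf'pos : 0 < 1 / (2 * Real.sqrt s) + Real.sqrt c / (2 * s * Real.sqrt s) := by
        positivity
      have hfs : (Real.sqrt s - Real.sqrt c / Real.sqrt s)^2 = s + c/s - 2*Real.sqrt c := by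
        field_simp
        linear_combination (√s^2*s - c)*hss + s*hcc
      rw [← ENNReal.ofReal_mul (abs_nonneg _), abs_of_pos hf'pos, hfs,
        show -(s + c/s - 2*Real.sqrt c) = 2*Real.sqrt c + (-s - c/s) by ring, exp_add,
        ← ENNReal.ofReal_mul (by positivity), ← ENNReal.ofReal_mul (by positivity),
        ← ENNReal.ofReal_add (by positivity) (by positivity)]
      apply congrArg ENNReal.ofReal
      rw [rpow_neg_half hs, rpow_neg_threehalf hs]
      field_simp
    rw [setLIntegral_congr_fun measurableSet_Ioi hcong,
      lintegral_add_left (by fun_prop), lintegral_const_mul' _ _ ENNReal.ofReal_ne_top,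
      lintegral_const_mul' _ _ ENNReal.ofReal_ne_top]
  rw [step1] at step2
  have step3 : ENNReal.ofReal (Real.sqrt π) =
      ENNReal.ofReal (exp (2*Real.sqrt c) * Real.sqrt c) * T := by
    rw [step2, ← mul_assoc, ← ENNReal.ofReal_mul (by positivity), ← add_mul,
      ← ENNReal.ofReal_add (by positivity) (by positivity)]
    congr 2
    ring
  have hA0 : ENNReal.ofReal (exp (2*Real.sqrt c) * Real.sqrt c) ≠ 0 := by
    rw [ne_eq, ENNReal.ofReal_eq_zero, not_le]
    positivity
  refine ((ENNReal.mul_right_inj hA0 ENNReal.ofReal_ne_top).mp ?_)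
  rw [← step3, ← ENNReal.ofReal_mul (by positivity)]
  apply congrArg ENNReal.ofReal
  rw [hsc, show 2*(a/2) = a by ring]
  rw [show exp a * (a/2) * (2 * Real.sqrt π / a * exp (-a))
      = (exp a * exp (-a)) * (Real.sqrt π * (a/a)) by ring, ← exp_add]
  simp [ha.ne']

lemma image_exp_pos {z : ℝ} (hz : 0 < z) :
    (fun t : ℝ => z/2 * Real.exp t) '' Ioi 0 = Ioi (z/2) := by
  ext y
  simp only [mem_image, mem_Ioi]
  constructor
  · rintro ⟨t, ht, rfl⟩
    have h1 : 1 < Real.exp t := by rw [← Real.exp_zero]; exact Real.exp_lt_exp.mpr ht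
    nlinarith
  · intro hy
    have hy' : 0 < y := by linarith [half_pos hz]
    have h1 : 1 < 2*y/z := by rw [lt_div_iff₀ hz]; linarith
    refine ⟨Real.log (2*y/z), Real.log_pos h1, ?_⟩
    rw [Real.exp_log (by positivity)]
    field_simp
  
lemma image_exp_neg {z : ℝ} (hz : 0 < z) :
    (fun t : ℝ => z/2 * Real.exp (-t)) '' Ioi 0 = Ioo 0 (z/2) := by
  ext y
  simp only [mem_image, mem_Ioi, mem_Ioo]
  constructor
  · rintro ⟨t, ht, rfl⟩
    have h1 : Real.exp (-t) < 1 := Real.exp_lt_one_iff.mpr (by linarith)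
    constructor
    · positivity
    · nlinarith
  · rintro ⟨hy0, hyz⟩
    have h1 : 1 < z/(2*y) := by rw [lt_div_iff₀ (by positivity)]; linarith
    refine ⟨Real.log (z/(2*y)), Real.log_pos h1, ?_⟩
    rw [← Real.log_inv, Real.exp_log (by positivity)]
    field_simp
  
lemma injOn_exp_pos (z : ℝ) (hz : 0 < z) :
    Set.InjOn (fun t : ℝ => z/2 * Real.exp t) (Ioi 0) := by
  intro a _ b _ h
  simp only [mul_eq_mul_left_iff] at h
  rcases h with h | h
  · exact Real.exp_injective h
  · linarith
  
lemma injOn_exp_neg (z : ℝ) (hz : 0 < z) :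
    Set.InjOn (fun t : ℝ => z/2 * Real.exp (-t)) (Ioi 0) := by
  intro a _ b _ h
  simp only [mul_eq_mul_left_iff] at h
  rcases h with h | h
  · have := Real.exp_injective h; linarith
  · linarith

lemma besselK_heat {z : ℝ} (hz : 0 < z) (ρ : ℝ) :
    ∫⁻ t in Ioi (0:ℝ), ENNReal.ofReal (Real.exp (-z * Real.cosh t) * Real.cosh (ρ * t)) =
      ENNReal.ofReal (1/2 * (2/z) ^ ρ) *
        ∫⁻ s in Ioi (0:ℝ), ENNReal.ofReal (s ^ (ρ - 1) * Real.exp (-s - z^2/(4*s))) := by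
  have hz2 : 0 < z/2 := half_pos hz
  -- A : integral over Ioi (z/2)
  have hA : ∫⁻ s in Ioi (z/2), ENNReal.ofReal (s ^ (ρ - 1) * Real.exp (-s - z^2/(4*s))) =
      ENNReal.ofReal ((z/2) ^ ρ) *
        ∫⁻ t in Ioi (0:ℝ), ENNReal.ofReal (Real.exp (ρ*t) * Real.exp (-z * Real.cosh t)) := by
    rw [← image_exp_pos hz,
      cov measurableSet_Ioi
        (fun t _ => ((Real.hasDerivAt_exp t).const_mul (z/2)).hasDerivWithinAt)
        (injOn_exp_pos z hz) _,
      ← lintegral_const_mul' _ _ ENNReal.ofReal_ne_top]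
    apply setLIntegral_congr_fun measurableSet_Ioi
    intro t _
    beta_reduce
    have hu : 0 < z/2 * Real.exp t := by positivity
    rw [← ENNReal.ofReal_mul (abs_nonneg _), abs_of_pos hu, ← ENNReal.ofReal_mul (by positivity)]
    apply congrArg ENNReal.ofReal
    have harg : -(z/2 * Real.exp t) - z^2/(4*(z/2 * Real.exp t)) = -z * Real.cosh t := by
      rw [Real.cosh_eq, Real.exp_neg]
      field_simp
      ring
    have hpow : (z/2 * Real.exp t) * (z/2 * Real.exp t) ^ (ρ - 1) = (z/2)^ρ * Real.exp (ρ*t) := by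
      nth_rewrite 1 [show (z/2 * Real.exp t) = (z/2 * Real.exp t)^(1:ℝ) by rw [Real.rpow_one]]
      rw [← Real.rpow_add hu, show (1:ℝ) + (ρ-1) = ρ by ring,
        Real.mul_rpow hz2.le (Real.exp_pos t).le, ← Real.exp_mul, mul_comm t ρ]
    rw [harg, ← mul_assoc, hpow]
    ring
  have hB : ∫⁻ s in Ioo (0:ℝ) (z/2), ENNReal.ofReal (s ^ (ρ - 1) * Real.exp (-s - z^2/(4*s))) =
      ENNReal.ofReal ((z/2) ^ ρ) *
        ∫⁻ t in Ioi (0:ℝ), ENNReal.ofReal (Real.exp (-(ρ*t)) * Real.exp (-z * Real.cosh t)) := by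
    have hder : ∀ t ∈ Ioi (0:ℝ), HasDerivWithinAt (fun t : ℝ => z/2 * Real.exp (-t))
        (-(z/2 * Real.exp (-t))) (Ioi 0) t := by
      intro t _
      have h1 : HasDerivAt (fun t : ℝ => Real.exp (-t)) (-Real.exp (-t)) t := by
        have := (Real.hasDerivAt_exp (-t)).comp t (hasDerivAt_neg t); simp at this; exact this
      simpa [mul_comm, neg_mul, mul_neg] using (h1.const_mul (z/2)).hasDerivWithinAt
    rw [← image_exp_neg hz, cov measurableSet_Ioi hder (injOn_exp_neg z hz) _,
      ← lintegral_const_mul' _ _ ENNReal.ofReal_ne_top]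
    apply setLIntegral_congr_fun measurableSet_Ioi
    intro t _
    beta_reduce
    have hu : 0 < z/2 * Real.exp (-t) := by positivity
    rw [abs_neg, ← ENNReal.ofReal_mul (abs_nonneg _), abs_of_pos hu,
      ← ENNReal.ofReal_mul (by positivity)]
    apply congrArg ENNReal.ofReal
    have harg : -(z/2 * Real.exp (-t)) - z^2/(4*(z/2 * Real.exp (-t))) = -z * Real.cosh t := by
      rw [Real.cosh_eq, Real.exp_neg]
      field_simp
      ring
    have hpow : (z/2 * Real.exp (-t)) * (z/2 * Real.exp (-t)) ^ (ρ - 1)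
        = (z/2)^ρ * Real.exp (-(ρ*t)) := by
      nth_rewrite 1 [show (z/2 * Real.exp (-t)) = (z/2 * Real.exp (-t))^(1:ℝ) by
        rw [Real.rpow_one]]
      rw [← Real.rpow_add hu, show (1:ℝ) + (ρ-1) = ρ by ring,
        Real.mul_rpow hz2.le (Real.exp_pos (-t)).le, ← Real.exp_mul, show -t*ρ = -(ρ*t) by ring]
    rw [harg, ← mul_assoc, hpow]
    ring
  -- split the s-integral
  have hsplit : ∫⁻ s in Ioi (0:ℝ), ENNReal.ofReal (s ^ (ρ - 1) * Real.exp (-s - z^2/(4*s))) =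
      (∫⁻ s in Ioo (0:ℝ) (z/2), ENNReal.ofReal (s ^ (ρ - 1) * Real.exp (-s - z^2/(4*s)))) +
      ∫⁻ s in Ioi (z/2), ENNReal.ofReal (s ^ (ρ - 1) * Real.exp (-s - z^2/(4*s))) := by
    rw [← Ioo_union_Ici_eq_Ioi hz2,
      lintegral_union measurableSet_Ici
        (Set.disjoint_left.mpr (fun x hx hx' => absurd hx.2 (not_lt.mpr hx'))),
      setLIntegral_congr (Ioi_ae_eq_Ici (μ := volume) (a := z/2)).symm]
  -- split the t-integrand
  have hcosh : ∀ t : ℝ, ENNReal.ofReal (Real.exp (-z * Real.cosh t) * Real.cosh (ρ * t)) =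
      ENNReal.ofReal (1/2) * (ENNReal.ofReal (Real.exp (ρ*t) * Real.exp (-z * Real.cosh t)) +
        ENNReal.ofReal (Real.exp (-(ρ*t)) * Real.exp (-z * Real.cosh t))) := by
    intro t
    rw [← ENNReal.ofReal_add (by positivity) (by positivity),
      ← ENNReal.ofReal_mul (by norm_num)]
    apply congrArg ENNReal.ofReal
    rw [Real.cosh_eq (ρ*t)]
    ring
  calc ∫⁻ t in Ioi (0:ℝ), ENNReal.ofReal (Real.exp (-z * Real.cosh t) * Real.cosh (ρ * t))
      = ∫⁻ t in Ioi (0:ℝ), ENNReal.ofReal (1/2) *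
          (ENNReal.ofReal (Real.exp (ρ*t) * Real.exp (-z * Real.cosh t)) +
           ENNReal.ofReal (Real.exp (-(ρ*t)) * Real.exp (-z * Real.cosh t))) := by
        exact setLIntegral_congr_fun measurableSet_Ioi
          (fun t _ => hcosh t)
    _ = ENNReal.ofReal (1/2) *
          ((∫⁻ t in Ioi (0:ℝ), ENNReal.ofReal (Real.exp (ρ*t) * Real.exp (-z * Real.cosh t))) +
           ∫⁻ t in Ioi (0:ℝ), ENNReal.ofReal (Real.exp (-(ρ*t)) * Real.exp (-z * Real.cosh t))) := by
        rw [lintegral_const_mul' _ _ ENNReal.ofReal_ne_top, lintegral_add_left (by fun_prop)]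
    _ = ENNReal.ofReal (1/2 * (2/z) ^ ρ) *
        ∫⁻ s in Ioi (0:ℝ), ENNReal.ofReal (s ^ (ρ - 1) * Real.exp (-s - z^2/(4*s))) := by
        have hk : ENNReal.ofReal (1/2 * (2/z)^ρ) * ENNReal.ofReal ((z/2)^ρ)
            = ENNReal.ofReal (1/2) := by
          rw [← ENNReal.ofReal_mul (by positivity)]
          congr 1
          rw [mul_assoc, ← Real.mul_rpow (by positivity) hz2.le,
            show 2/z * (z/2) = 1 by field_simp, Real.one_rpow, mul_one]
        rw [hsplit, hA, hB, ← hk]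
        ring

lemma gamma_lint {ν : ℝ} (hν : 0 < ν) :
    ∫⁻ r in Ioi (0:ℝ), ENNReal.ofReal (r ^ (ν - 1) * Real.exp (-r)) =
      ENNReal.ofReal (Real.Gamma ν) := by
  have h1 : ENNReal.ofReal (∫ x in Ioi (0:ℝ), Real.exp (-x) * x ^ (ν-1)) =
      ∫⁻ x in Ioi (0:ℝ), ENNReal.ofReal (Real.exp (-x) * x ^ (ν-1)) :=
    ofReal_integral_eq_lintegral_ofReal (Real.GammaIntegral_convergent hν)
      ((ae_restrict_iff' measurableSet_Ioi).mpr
        (Filter.Eventually.of_forall fun x hx => by have hx' : 0 < x := hx; positivity))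
  rw [Real.Gamma_eq_integral hν, h1]
  exact lintegral_congr fun x => by rw [mul_comm]

lemma image_quad {k β : ℝ} (hk : 0 < k) (hβ : 0 < β) :
    (fun x : ℝ => k * (x * (x + β))) '' Ioi 0 = Ioi 0 := by
  ext y
  simp only [mem_image, mem_Ioi]
  constructor
  · rintro ⟨x, hx, rfl⟩; positivity
  · intro hy
    set D := Real.sqrt (β^2 + 4*y/k) with hD
    have hD2 : D^2 = β^2 + 4*y/k := Real.sq_sqrt (by positivity)
    have hDβ : β < D := by
      by_contra hcon
      push_neg at hcon
      have h4 : 0 < 4*y/k := by positivity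
      nlinarith [Real.sqrt_nonneg (β^2 + 4*y/k), hD2]
    refine ⟨(D - β)/2, by linarith, ?_⟩
    have : (D-β)/2 * ((D-β)/2 + β) = y/k := by linear_combination hD2/4
    rw [this]
    field_simp

lemma injOn_quad {k β : ℝ} (hk : 0 < k) (hβ : 0 < β) :
    Set.InjOn (fun x : ℝ => k * (x * (x + β))) (Ioi 0) := by
  intro a ha b hb h
  simp only [mem_Ioi] at ha hb
  simp only [mul_eq_mul_left_iff] at h
  rcases h with h | h
  · nlinarith
  · linarith

lemma key (μ ν β : ℝ) (hμ : 0 < μ) (hν : 0 < ν) (hβ : 0 < β) :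
    ENNReal.ofReal (Real.Gamma ν) *
      ∫⁻ s in Ioi (0:ℝ),
        ENNReal.ofReal (s ^ (ν - 1/2 - 1) * exp (-s - (β*μ/2)^2/(4*s))) =
    ENNReal.ofReal ((μ^2/4)^ν * (4*Real.sqrt π/μ) * exp (-(β*μ/2))) *
      ∫⁻ x in Ioi (0:ℝ), ENNReal.ofReal (x ^ (ν-1) * (x+β) ^ (ν-1) * exp (-μ*x)) := by
  set F : ℝ → ℝ → ℝ≥0∞ := fun s x => ENNReal.ofReal
    ((μ^2/4)^ν * ((2*x+β) * (x*(x+β)) ^ (ν-1)) *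
      (s ^ (-(3:ℝ)/2) * exp (-s - (μ*x + β*μ/2)^2/(4*s)))) with hF
  have claim1 : ∀ s ∈ Ioi (0:ℝ),
      ENNReal.ofReal (Real.Gamma ν) *
        ENNReal.ofReal (s ^ (ν - 1/2 - 1) * exp (-s - (β*μ/2)^2/(4*s))) =
      ∫⁻ x in Ioi (0:ℝ), F s x := by
    intro s hs
    simp only [mem_Ioi] at hs
    have hk : 0 < μ^2/(4*s) := by positivity
    have hder : ∀ x ∈ Ioi (0:ℝ), HasDerivWithinAt (fun x : ℝ => μ^2/(4*s) * (x * (x + β)))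
        (μ^2/(4*s) * (2*x+β)) (Ioi 0) x := by
      intro x _
      have h1 : HasDerivAt (fun x : ℝ => μ^2/(4*s) * (x * (x + β)))
          (μ^2/(4*s) * (1 * (x + β) + x * 1)) x :=
        (((hasDerivAt_id x).mul ((hasDerivAt_id x).add_const β)).const_mul (μ^2/(4*s)))
      have h2 : μ^2/(4*s) * (1 * (x + β) + x * 1) = μ^2/(4*s) * (2*x+β) := by ring
      exact (h2 ▸ h1).hasDerivWithinAt
    have hcov := cov measurableSet_Ioi hder (injOn_quad hk hβ)
      (fun r => ENNReal.ofReal (s ^ (ν - 1/2 - 1) * exp (-s - (β*μ/2)^2/(4*s))) *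
        ENNReal.ofReal (r ^ (ν-1) * exp (-r)))
    rw [image_quad hk hβ] at hcov
    rw [mul_comm (ENNReal.ofReal (Real.Gamma ν)), ← gamma_lint hν,
      ← lintegral_const_mul' _ _ ENNReal.ofReal_ne_top, hcov]
    apply setLIntegral_congr_fun measurableSet_Ioi
    intro x hx
    beta_reduce
    simp only [mem_Ioi] at hx
    have hw : 0 < x * (x + β) := by positivity
    have habs : |μ^2/(4*s) * (2*x+β)| = μ^2/(4*s) * (2*x+β) := abs_of_pos (by positivity)
    rw [habs, hF]
    rw [← ENNReal.ofReal_mul (by positivity), ← ENNReal.ofReal_mul (by positivity)]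
    apply congrArg ENNReal.ofReal
    -- real computation
    have h1 : (μ^2/(4*s) * (x*(x+β))) ^ (ν-1)
        = (μ^2/4) ^ (ν-1) * (s ^ (ν-1))⁻¹ * (x*(x+β)) ^ (ν-1) := by
      rw [Real.mul_rpow hk.le hw.le, show μ^2/(4*s) = (μ^2/4)/s by ring,
        Real.div_rpow (by positivity) hs.le]
      ring
    have h2 : exp (-s - (β*μ/2)^2/(4*s)) * exp (-(μ^2/(4*s) * (x*(x+β))))
        = exp (-s - (μ*x + β*μ/2)^2/(4*s)) := by
      rw [← Real.exp_add]
      congr 1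
      field_simp
      ring
    have h3 : s ^ (ν - 1/2 - 1) * (s ^ (ν-1))⁻¹ * s⁻¹ = s ^ (-(3:ℝ)/2) := by
      rw [← Real.rpow_neg_one s, ← Real.rpow_neg hs.le, ← Real.rpow_add hs, ← Real.rpow_add hs]
      norm_num
    have h4 : (μ^2/4) ^ (ν-1) * (μ^2/4) = (μ^2/4) ^ ν := by
      nth_rewrite 2 [show (μ^2/4) = (μ^2/4) ^ (1:ℝ) by rw [Real.rpow_one]]
      rw [← Real.rpow_add (by positivity), sub_add_cancel]
    rw [h1, ← h4, ← h3, ← h2]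
    ring
  have claim2 : ∀ x ∈ Ioi (0:ℝ),
      ∫⁻ s in Ioi (0:ℝ), F s x =
      ENNReal.ofReal ((μ^2/4)^ν * (4*Real.sqrt π/μ) * exp (-(β*μ/2)) *
        (x ^ (ν-1) * (x+β) ^ (ν-1) * exp (-μ*x))) := by
    intro x hx
    simp only [mem_Ioi] at hx
    have ha : 0 < μ*x + β*μ/2 := by positivity
    have hCx : (0:ℝ) ≤ (μ^2/4)^ν * ((2*x+β) * (x*(x+β)) ^ (ν-1)) := by positivity
    calc ∫⁻ s in Ioi (0:ℝ), F s x
        = ∫⁻ s in Ioi (0:ℝ), ENNReal.ofReal ((μ^2/4)^ν * ((2*x+β) * (x*(x+β)) ^ (ν-1))) *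
            ENNReal.ofReal (s ^ (-(3:ℝ)/2) * exp (-s - (μ*x + β*μ/2)^2/(4*s))) := by
          simp only [hF]
          exact lintegral_congr fun s => (ENNReal.ofReal_mul hCx)
      _ = ENNReal.ofReal ((μ^2/4)^ν * ((2*x+β) * (x*(x+β)) ^ (ν-1))) *
            ENNReal.ofReal (2 * Real.sqrt π / (μ*x + β*μ/2) * exp (-(μ*x + β*μ/2))) := by
          rw [lintegral_const_mul' _ _ ENNReal.ofReal_ne_top, subord ha]
      _ = ENNReal.ofReal ((μ^2/4)^ν * (4*Real.sqrt π/μ) * exp (-(β*μ/2)) *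
            (x ^ (ν-1) * (x+β) ^ (ν-1) * exp (-μ*x))) := by
          rw [← ENNReal.ofReal_mul hCx]
          apply congrArg ENNReal.ofReal
          rw [Real.mul_rpow hx.le (by positivity),
            show -(μ*x + β*μ/2) = -μ*x + -(β*μ/2) by ring, Real.exp_add]
          have h2xβ : μ*x + β*μ/2 ≠ 0 := ha.ne'
          field_simp
          ring
  have hmeas : AEMeasurable (Function.uncurry F)
      ((volume.restrict (Ioi (0:ℝ))).prod (volume.restrict (Ioi (0:ℝ)))) := by
    apply Measurable.aemeasurable
    rw [hF]
    fun_prop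
  have hc0 : (0:ℝ) ≤ (μ^2/4)^ν * (4*Real.sqrt π/μ) * exp (-(β*μ/2)) := by positivity
  calc ENNReal.ofReal (Real.Gamma ν) *
      ∫⁻ s in Ioi (0:ℝ), ENNReal.ofReal (s ^ (ν - 1/2 - 1) * exp (-s - (β*μ/2)^2/(4*s)))
      = ∫⁻ s in Ioi (0:ℝ), ENNReal.ofReal (Real.Gamma ν) *
          ENNReal.ofReal (s ^ (ν - 1/2 - 1) * exp (-s - (β*μ/2)^2/(4*s))) :=
        (lintegral_const_mul' _ _ ENNReal.ofReal_ne_top).symm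
    _ = ∫⁻ s in Ioi (0:ℝ), ∫⁻ x in Ioi (0:ℝ), F s x :=
        setLIntegral_congr_fun measurableSet_Ioi claim1
    _ = ∫⁻ x in Ioi (0:ℝ), ∫⁻ s in Ioi (0:ℝ), F s x := lintegral_lintegral_swap hmeas
    _ = ∫⁻ x in Ioi (0:ℝ), ENNReal.ofReal ((μ^2/4)^ν * (4*Real.sqrt π/μ) * exp (-(β*μ/2)) *
          (x ^ (ν-1) * (x+β) ^ (ν-1) * exp (-μ*x))) :=
        setLIntegral_congr_fun measurableSet_Ioi claim2
    _ = ENNReal.ofReal ((μ^2/4)^ν * (4*Real.sqrt π/μ) * exp (-(β*μ/2))) *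
          ∫⁻ x in Ioi (0:ℝ), ENNReal.ofReal (x ^ (ν-1) * (x+β) ^ (ν-1) * exp (-μ*x)) := by
        simp_rw [ENNReal.ofReal_mul hc0]
        exact lintegral_const_mul' _ _ ENNReal.ofReal_ne_top

lemma S_ne_top {ν z : ℝ} (hν : 0 < ν) (hz : 0 < z) :
    ∫⁻ s in Ioi (0:ℝ), ENNReal.ofReal (s ^ (ν - 1/2 - 1) * exp (-s - z^2/(4*s))) ≠ ⊤ := by
  have hb : ∀ s ∈ Ioi (0:ℝ),
      ENNReal.ofReal (s ^ (ν - 1/2 - 1) * exp (-s - z^2/(4*s))) ≤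
      ENNReal.ofReal ((4/z^2) * (s ^ (ν + 1/2 - 1) * exp (-s))) := by
    intro s hs
    simp only [mem_Ioi] at hs
    apply ENNReal.ofReal_le_ofReal
    have h1 : exp (-s - z^2/(4*s)) = exp (-s) * exp (-(z^2/(4*s))) := by
      rw [← Real.exp_add]; ring_nf
    have hw : 0 < z^2/(4*s) := by positivity
    have h2 : exp (-(z^2/(4*s))) ≤ 4*s/z^2 := by
      have h3 : z^2/(4*s) ≤ exp (z^2/(4*s)) := by
        linarith [Real.add_one_le_exp (z^2/(4*s))]
      rw [Real.exp_neg]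
      calc (exp (z^2/(4*s)))⁻¹ ≤ (z^2/(4*s))⁻¹ := by
            apply inv_anti₀ hw h3
        _ = 4*s/z^2 := by rw [inv_div]
    calc s ^ (ν - 1/2 - 1) * exp (-s - z^2/(4*s))
        = (s ^ (ν - 1/2 - 1) * exp (-s)) * exp (-(z^2/(4*s))) := by rw [h1]; ring
      _ ≤ (s ^ (ν - 1/2 - 1) * exp (-s)) * (4*s/z^2) :=
          mul_le_mul_of_nonneg_left h2 (by positivity)
      _ = (4/z^2) * (s ^ (ν + 1/2 - 1) * exp (-s)) := by
          rw [show ν + 1/2 - 1 = (ν - 1/2 - 1) + 1 by ring, Real.rpow_add hs, Real.rpow_one]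
          ring
  have hle := setLIntegral_mono' (μ := volume) measurableSet_Ioi hb
  have heq : ∫⁻ s in Ioi (0:ℝ), ENNReal.ofReal ((4/z^2) * (s ^ (ν + 1/2 - 1) * exp (-s))) =
      ENNReal.ofReal (4/z^2) * ENNReal.ofReal (Real.Gamma (ν + 1/2)) := by
    simp_rw [ENNReal.ofReal_mul (by positivity : (0:ℝ) ≤ 4/z^2)]
    rw [lintegral_const_mul' _ _ ENNReal.ofReal_ne_top, gamma_lint (by linarith)]
  have hfin : ∫⁻ s in Ioi (0:ℝ), ENNReal.ofReal ((4/z^2) * (s ^ (ν + 1/2 - 1) * exp (-s))) ≠ ⊤ := by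
    rw [heq]
    exact ENNReal.mul_ne_top ENNReal.ofReal_ne_top ENNReal.ofReal_ne_top
  exact ne_top_of_le_ne_top hfin hle

lemma const_id {μ ν β : ℝ} (hμ : 0 < μ) (hν : 0 < ν) (hβ : 0 < β) :
    (1/Real.sqrt π) * (β/μ)^(ν-1/2) * Real.exp (β*μ/2) * (1/2 * (2/(β*μ/2))^(ν-1/2)) *
      ((μ^2/4)^ν * (4*Real.sqrt π/μ) * Real.exp (-(β*μ/2))) = 1 := by
  have hπ : 0 < Real.sqrt π := Real.sqrt_pos.mpr Real.pi_pos
  have h1 : (β/μ)^(ν-1/2) * (2/(β*μ/2))^(ν-1/2) = ((μ^2/4 : ℝ)^(ν-1/2))⁻¹ := by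
    rw [← Real.mul_rpow (by positivity) (by positivity),
      show β/μ * (2/(β*μ/2)) = (μ^2/4)⁻¹ by rw [inv_div]; field_simp; ring,
      Real.inv_rpow (by positivity)]
  have h2 : (μ^2/4:ℝ)^ν = (μ^2/4)^(ν-1/2) * (μ/2) := by
    nth_rewrite 1 [show ν = (ν-1/2) + 1/2 by ring]
    rw [Real.rpow_add (by positivity), ← Real.sqrt_eq_rpow,
      show μ^2/4 = (μ/2)^2 by ring, Real.sqrt_sq (by positivity)]
  have h3 : Real.exp (β*μ/2) * Real.exp (-(β*μ/2)) = 1 := by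
    rw [← Real.exp_add]; simp
  have h4 : ((μ^2/4:ℝ))^(ν-1/2) ≠ 0 := (Real.rpow_pos_of_pos (by positivity) _).ne'
  calc (1/Real.sqrt π) * (β/μ)^(ν-1/2) * Real.exp (β*μ/2) * (1/2 * (2/(β*μ/2))^(ν-1/2)) *
      ((μ^2/4)^ν * (4*Real.sqrt π/μ) * Real.exp (-(β*μ/2)))
      = ((β/μ)^(ν-1/2) * (2/(β*μ/2))^(ν-1/2)) * ((μ^2/4:ℝ)^ν) *
        (Real.exp (β*μ/2) * Real.exp (-(β*μ/2))) * ((1/Real.sqrt π) * (1/2) *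
          (4*Real.sqrt π/μ)) := by ring
    _ = ((μ^2/4 : ℝ)^(ν-1/2))⁻¹ * ((μ^2/4)^(ν-1/2) * (μ/2)) * 1 *
        ((1/Real.sqrt π) * (1/2) * (4*Real.sqrt π/μ)) := by rw [h1, h2, h3]
    _ = 1 := by field_simp; ring

/-- The modified Bessel function of the second kind (integral representation). -/
noncomputable def besselK (ν x : ℝ) : ℝ :=
  ∫ t in Set.Ioi (0 : ℝ), Real.exp (-x * Real.cosh t) * Real.cosh (ν * t)

theorem integral_rpow_mul_shift_rpow_mul_exp (μ ν β : ℝ) (hμ : 0 < μ) (hν : 0 < ν)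
    (hβ : 0 < β) :
    ∫ x in Set.Ioi (0 : ℝ), x ^ (ν - 1) * (x + β) ^ (ν - 1) * Real.exp (-μ * x) =
      (1 / Real.sqrt Real.pi) * (β / μ) ^ (ν - 1 / 2) * Real.exp (β * μ / 2) *
        Real.Gamma ν * besselK (1 / 2 - ν) (β * μ / 2) := by
  have hz : 0 < β * μ / 2 := by positivity
  have hc0 : 0 < (μ^2/4)^ν * (4*Real.sqrt π/μ) * Real.exp (-(β*μ/2)) := by positivity
  have hSne : (∫⁻ s in Ioi (0:ℝ),
      ENNReal.ofReal (s ^ (ν - 1/2 - 1) * Real.exp (-s - (β*μ/2)^2/(4*s)))) ≠ ⊤ :=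
    S_ne_top hν hz
  set σ := (∫⁻ s in Ioi (0:ℝ),
      ENNReal.ofReal (s ^ (ν - 1/2 - 1) * Real.exp (-s - (β*μ/2)^2/(4*s)))).toReal with hσ_def
  have hσ0 : 0 ≤ σ := ENNReal.toReal_nonneg
  have hSσ : (∫⁻ s in Ioi (0:ℝ),
      ENNReal.ofReal (s ^ (ν - 1/2 - 1) * Real.exp (-s - (β*μ/2)^2/(4*s))))
      = ENNReal.ofReal σ := (ENNReal.ofReal_toReal hSne).symm
  have hG : 0 < Real.Gamma ν := Real.Gamma_pos_of_pos hν
  have hkey := key μ ν β hμ hν hβ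
  -- value of the main lintegral
  have hLval : (∫⁻ x in Ioi (0:ℝ),
      ENNReal.ofReal (x ^ (ν-1) * (x+β) ^ (ν-1) * Real.exp (-μ*x)))
      = ENNReal.ofReal (Real.Gamma ν * σ /
          ((μ^2/4)^ν * (4*Real.sqrt π/μ) * Real.exp (-(β*μ/2)))) := by
    apply (ENNReal.mul_right_inj
      (a := ENNReal.ofReal ((μ^2/4)^ν * (4*Real.sqrt π/μ) * Real.exp (-(β*μ/2))))
      (by rw [ne_eq, ENNReal.ofReal_eq_zero, not_le]; exact hc0) ENNReal.ofReal_ne_top).mp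
    rw [← hkey, hSσ, ← ENNReal.ofReal_mul hG.le, ← ENNReal.ofReal_mul hc0.le]
    congr 1
    field_simp
  -- the Bochner integral on the LHS
  have hnn1 : 0 ≤ᵐ[volume.restrict (Ioi (0:ℝ))]
      fun x : ℝ => x ^ (ν-1) * (x+β) ^ (ν-1) * Real.exp (-μ*x) :=
    (ae_restrict_iff' measurableSet_Ioi).mpr (Filter.Eventually.of_forall fun x hx => by
      have hx' : (0:ℝ) < x := hx
      positivity)
  have hlhs : ∫ x in Ioi (0:ℝ), x ^ (ν - 1) * (x + β) ^ (ν - 1) * Real.exp (-μ * x)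
      = Real.Gamma ν * σ / ((μ^2/4)^ν * (4*Real.sqrt π/μ) * Real.exp (-(β*μ/2))) := by
    rw [integral_eq_lintegral_of_nonneg_ae hnn1
      (by apply Measurable.aestronglyMeasurable; fun_prop), hLval,
      ENNReal.toReal_ofReal (by positivity)]
  -- the Bessel function value
  have hnn2 : 0 ≤ᵐ[volume.restrict (Ioi (0:ℝ))]
      fun t : ℝ => Real.exp (-(β*μ/2) * Real.cosh t) * Real.cosh ((1/2 - ν) * t) :=
    Filter.Eventually.of_forall fun t =>
      mul_nonneg (Real.exp_pos _).le (Real.cosh_pos _).le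
  have hBint : ∫⁻ t in Ioi (0:ℝ),
      ENNReal.ofReal (Real.exp (-(β*μ/2) * Real.cosh t) * Real.cosh ((1/2 - ν) * t)) =
      ENNReal.ofReal (1/2 * (2/(β*μ/2)) ^ (ν - 1/2)) *
        ∫⁻ s in Ioi (0:ℝ),
          ENNReal.ofReal (s ^ (ν - 1/2 - 1) * Real.exp (-s - (β*μ/2)^2/(4*s))) := by
    rw [← besselK_heat hz (ν - 1/2)]
    exact lintegral_congr fun t => by
      rw [show (1/2 - ν) * t = -((ν - 1/2) * t) by ring, Real.cosh_neg]
  have hbes : besselK (1/2 - ν) (β*μ/2) = 1/2 * (2/(β*μ/2)) ^ (ν - 1/2) * σ := by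
    rw [besselK, integral_eq_lintegral_of_nonneg_ae hnn2
      (by apply Measurable.aestronglyMeasurable; fun_prop), hBint, hSσ,
      ← ENNReal.ofReal_mul (by positivity), ENNReal.toReal_ofReal (by positivity)]
  rw [hlhs, hbes, div_eq_iff hc0.ne']
  have hcid := const_id hμ hν hβ
  linear_combination (-(Real.Gamma ν * σ)) * hcid
end

section
/- For β > 0 and γ > 0 and real ν, ∫_0^∞ x^{ν-1}·e^{-β/x - γx} dx = 2·(β/γ)^{ν/2}·K_ν(2√(βγ)), where K_ν is the modified Bessel function of the second kind. -/
open Real MeasureTheory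

open Filter Asymptotics in
lemma integrableOn_exp_mul_sub_cosh (μ a : ℝ) (ha : 0 < a) :
    IntegrableOn (fun t => Real.exp (μ * t - a * Real.cosh t)) (Set.Ioi (0 : ℝ)) := by
  apply integrable_of_isBigO_exp_neg (b := 1) one_pos
    (Continuous.continuousOn (by continuity))
  rw [Asymptotics.isBigO_iff]
  refine ⟨1, ?_⟩
  have h2 : Tendsto (fun t : ℝ => t * Real.exp (-t)) atTop (nhds 0) := by
    simpa using Real.tendsto_pow_mul_exp_neg_atTop_nhds_zero 1
  have hε : (0 : ℝ) < a / (2 * (|μ| + 1)) := by positivity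
  have h3 : ∀ᶠ t in atTop, t * Real.exp (-t) < a / (2 * (|μ| + 1)) :=
    h2.eventually_lt_const hε
  filter_upwards [h3, eventually_ge_atTop (0 : ℝ)] with t ht ht0
  rw [Real.norm_eq_abs, Real.norm_eq_abs, abs_of_pos (Real.exp_pos _),
    abs_of_pos (Real.exp_pos _), one_mul, Real.exp_le_exp]
  have ht' : t ≤ a / (2 * (|μ| + 1)) * Real.exp t := by
    have := mul_le_mul_of_nonneg_right ht.le (Real.exp_pos t).le
    rwa [mul_assoc, ← Real.exp_add, neg_add_cancel, Real.exp_zero, mul_one] at this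
  have hcosh : Real.exp t / 2 ≤ Real.cosh t := by
    rw [Real.cosh_eq]
    have := (Real.exp_pos (-t)).le
    linarith
  have hmu : (μ + 1) * t ≤ (|μ| + 1) * t := by
    apply mul_le_mul_of_nonneg_right _ ht0
    have := le_abs_self μ; linarith
  have h4 : (|μ| + 1) * t ≤ a / 2 * Real.exp t := by
    have h := mul_le_mul_of_nonneg_left ht' (by positivity : (0:ℝ) ≤ |μ| + 1)
    calc (|μ| + 1) * t ≤ (|μ| + 1) * (a / (2 * (|μ| + 1)) * Real.exp t) := h
      _ = a / 2 * Real.exp t := by field_simp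
  have h5 : a / 2 * Real.exp t ≤ a * Real.cosh t := by
    have h := mul_le_mul_of_nonneg_left hcosh ha.le
    calc a / 2 * Real.exp t = a * (Real.exp t / 2) := by ring
      _ ≤ a * Real.cosh t := h
  nlinarith

theorem integral_rpow_mul_exp_inv_sub (β γ ν : ℝ) (hβ : 0 < β) (hγ : 0 < γ) :
    ∫ x in Set.Ioi (0 : ℝ), x ^ (ν - 1) * Real.exp (-β / x - γ * x) =
      2 * (β / γ) ^ (ν / 2) * besselK ν (2 * Real.sqrt (β * γ)) := by
  set a : ℝ := 2 * Real.sqrt (β * γ) with ha_def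
  have ha : 0 < a := by positivity
  set c : ℝ := Real.sqrt (β / γ) with hc_def
  have hc : 0 < c := Real.sqrt_pos.mpr (by positivity)
  -- Step A: substitute x = exp t
  have stepA : (∫ x in Set.Ioi (0 : ℝ), x ^ (ν - 1) * Real.exp (-β / x - γ * x)) =
      ∫ t : ℝ, Real.exp (ν * t - (β * Real.exp (-t) + γ * Real.exp t)) := by
    have himg : Real.exp '' Set.univ = Set.Ioi (0 : ℝ) := by
      rw [Set.image_univ, Real.range_exp]
    rw [← himg, integral_image_eq_integral_abs_deriv_smul MeasurableSet.univ
      (fun t _ => (Real.hasDerivAt_exp t).hasDerivWithinAt) Real.exp_injective.injOn,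
      MeasureTheory.setIntegral_univ]
    refine integral_congr_ae (Filter.Eventually.of_forall fun t => ?_)
    show |Real.exp t| • (Real.exp t ^ (ν - 1) * Real.exp (-β / Real.exp t - γ * Real.exp t)) = _
    rw [smul_eq_mul, abs_of_pos (Real.exp_pos t), ← Real.exp_mul,
      show -β / Real.exp t - γ * Real.exp t
        = -(β * Real.exp (-t)) - γ * Real.exp t by rw [Real.exp_neg]; ring,
      ← Real.exp_add, ← Real.exp_add]
    congr 1
    ring
  -- facts about c
  have hbc : β / c = Real.sqrt (β * γ) := by
    have h : c * Real.sqrt (β * γ) = β := by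
      rw [hc_def, ← Real.sqrt_mul (by positivity),
        show β / γ * (β * γ) = β ^ 2 by field_simp, Real.sqrt_sq hβ.le]
    exact (div_eq_iff hc.ne').mpr (by linear_combination -h)
  have hgc : γ * c = Real.sqrt (β * γ) := by
    have h : γ * Real.sqrt (β / γ) = Real.sqrt (γ ^ 2) * Real.sqrt (β / γ) := by
      rw [Real.sqrt_sq hγ.le]
    rw [hc_def, h, ← Real.sqrt_mul (by positivity),
      show γ ^ 2 * (β / γ) = β * γ by field_simp]
  -- Step B: translate t = s + log c
  have stepB : (∫ t : ℝ, Real.exp (ν * t - (β * Real.exp (-t) + γ * Real.exp t))) =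
      c ^ ν * ∫ s : ℝ, Real.exp (ν * s - a * Real.cosh s) := by
    rw [← MeasureTheory.integral_add_right_eq_self
      (fun t => Real.exp (ν * t - (β * Real.exp (-t) + γ * Real.exp t))) (Real.log c),
      ← integral_const_mul]
    refine integral_congr_ae (Filter.Eventually.of_forall fun s => ?_)
    show Real.exp (ν * (s + Real.log c) -
        (β * Real.exp (-(s + Real.log c)) + γ * Real.exp (s + Real.log c))) =
      c ^ ν * Real.exp (ν * s - a * Real.cosh s)
    have e1 : β * Real.exp (-(s + Real.log c)) = Real.sqrt (β * γ) * Real.exp (-s) := by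
      rw [neg_add, Real.exp_add, Real.exp_neg (Real.log c), Real.exp_log hc, ← hbc]
      field_simp
    have e2 : γ * Real.exp (s + Real.log c) = Real.sqrt (β * γ) * Real.exp s := by
      rw [Real.exp_add, Real.exp_log hc, ← hgc]; ring
    have hcν : c ^ ν = Real.exp (ν * Real.log c) := by
      rw [mul_comm, Real.exp_mul, Real.exp_log hc]
    rw [e1, e2, hcν, ← Real.exp_add]
    congr 1
    rw [ha_def, Real.cosh_eq]
    ring
  -- Step C: split into two halves
  have hInt1 : IntegrableOn (fun s => Real.exp (ν * s - a * Real.cosh s)) (Set.Ioi 0) :=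
    integrableOn_exp_mul_sub_cosh ν a ha
  have hInt2 : IntegrableOn (fun s => Real.exp (-(ν * s) - a * Real.cosh s)) (Set.Ioi 0) := by
    refine (integrableOn_exp_mul_sub_cosh (-ν) a ha).congr_fun (fun x _ => ?_) measurableSet_Ioi
    simp [neg_mul]
  have hIic : IntegrableOn (fun s => Real.exp (ν * s - a * Real.cosh s)) (Set.Iic 0) := by
    rw [← (Measure.measurePreserving_neg (volume : Measure ℝ)).integrableOn_comp_preimage
      (Homeomorph.neg ℝ).measurableEmbedding]
    simp only [Function.comp_def, Set.neg_preimage, Set.neg_Iic, neg_zero,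
      integrableOn_Ici_iff_integrableOn_Ioi]
    rw [integrableOn_Ici_iff_integrableOn_Ioi]
    refine hInt2.congr_fun (fun x _ => ?_) measurableSet_Ioi
    simp [Real.cosh_neg, mul_neg]
  have hIic' : (∫ s in Set.Iic (0:ℝ), Real.exp (ν * s - a * Real.cosh s)) =
      ∫ s in Set.Ioi (0:ℝ), Real.exp (-(ν * s) - a * Real.cosh s) := by
    have h := integral_comp_neg_Iic (0:ℝ)
      (fun s => Real.exp (-(ν * s) - a * Real.cosh s))
    simp only [mul_neg, neg_neg, Real.cosh_neg, neg_zero] at h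
    exact h.symm ▸ rfl
  have stepC : (∫ s : ℝ, Real.exp (ν * s - a * Real.cosh s)) = 2 * besselK ν a := by
    rw [← intervalIntegral.integral_Iic_add_Ioi hIic hInt1, hIic',
      ← MeasureTheory.integral_add hInt2 hInt1]
    unfold besselK
    rw [← MeasureTheory.integral_const_mul]
    refine setIntegral_congr_fun measurableSet_Ioi (fun s _ => ?_)
    show Real.exp (-(ν * s) - a * Real.cosh s) + Real.exp (ν * s - a * Real.cosh s) = _
    rw [Real.cosh_eq, Real.cosh_eq, sub_eq_add_neg, sub_eq_add_neg, Real.exp_add,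
      Real.exp_add, neg_mul]
    ring
  have hcν2 : c ^ ν = (β / γ) ^ (ν / 2) := by
    rw [hc_def, Real.sqrt_eq_rpow, ← Real.rpow_mul (by positivity),
      show (1/2 : ℝ) * ν = ν / 2 by ring]
  rw [stepA, stepB, stepC, hcν2]
  ring
end

section
/- Let X₁ and X₂ be independent chi-squared random variables with l degrees of freedom. Then W = X₁ - X₂ has density f_W(w) = |w|^{l/2 - 1/2}·K_{1/2 - l/2}(|w|/2) / (√π · 2^l · Γ(l/2)) for w ≠ 0. -/
open Real MeasureTheory ProbabilityTheory

/-- The chi-squared distribution with `l` degrees of freedom, via its density. -/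
noncomputable def chiSq (l : ℕ) : Measure ℝ :=
  MeasureTheory.volume.withDensity fun x =>
    ENNReal.ofReal (if 0 ≤ x then
      x ^ ((l : ℝ) / 2 - 1) * Real.exp (-x / 2) / (2 ^ ((l : ℝ) / 2) * Real.Gamma (l / 2))
    else 0)

open Set Filter Topology
open scoped ENNReal


/-- exp of a linear function minus `z * cosh` decays at least like `exp (-t)` for large `t`. -/
lemma exp_lin_sub_cosh_le (z c : ℝ) (hz : 0 < z) {t : ℝ} (ht : max 1 (8 * (c + 1) / z) ≤ t) :
    Real.exp (c * t - z * Real.cosh t) ≤ Real.exp (-t) := by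
  have ht1 : (1:ℝ) ≤ t := le_trans (le_max_left _ _) ht
  have ht0 : (0:ℝ) ≤ t := by linarith
  have h1 : t ^ 2 / 4 ≤ Real.exp t := by
    have h2 : (1 + t/2) ^ 2 ≤ (Real.exp (t/2)) ^ 2 := by
      apply pow_le_pow_left₀ (by positivity)
      have := Real.add_one_le_exp (t/2); linarith
    have h3 : t ^2 / 4 ≤ (1 + t/2)^2 := by nlinarith
    calc t^2/4 ≤ (1+t/2)^2 := h3
      _ ≤ (Real.exp (t/2))^2 := h2
      _ = Real.exp t := by rw [sq, ← Real.exp_add]; norm_num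
  have h4 : Real.exp t / 2 ≤ Real.cosh t := by
    rw [Real.cosh_eq]
    have := (Real.exp_pos (-t)).le
    linarith
  have h5 : z * (t^2/8) ≤ z * Real.cosh t := by
    apply mul_le_mul_of_nonneg_left _ hz.le
    calc t^2/8 = (t^2/4)/2 := by ring
      _ ≤ Real.exp t / 2 := by linarith
      _ ≤ Real.cosh t := h4
  have ht2 : 8 * (c+1) / z ≤ t := le_trans (le_max_right _ _) ht
  have h6 : (c+1) * t ≤ z * (t^2/8) := by
    rw [div_le_iff₀ hz] at ht2
    nlinarith
  apply Real.exp_le_exp.2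
  nlinarith

lemma integrableOn_exp_lin_sub_cosh (z c : ℝ) (hz : 0 < z) :
    IntegrableOn (fun t => Real.exp (c * t - z * Real.cosh t)) (Ioi (0:ℝ)) := by
  set T := max 1 (8 * (c + 1) / z) with hT
  have hT0 : (0:ℝ) < T := lt_of_lt_of_le one_pos (le_max_left _ _)
  have : Ioc (0:ℝ) T ∪ Ioi T = Ioi 0 := Ioc_union_Ioi_eq_Ioi hT0.le
  rw [← this]
  apply IntegrableOn.union
  · have hc : Continuous (fun t => Real.exp (c * t - z * Real.cosh t)) := by continuity
    exact (hc.continuousOn).integrableOn_compact isCompact_Icc |>.mono_set Ioc_subset_Icc_self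
  · have hc : Continuous (fun t => Real.exp (c * t - z * Real.cosh t)) := by continuity
    apply Integrable.mono (exp_neg_integrableOn_Ioi T one_pos) hc.aestronglyMeasurable.restrict
    filter_upwards [ae_restrict_mem measurableSet_Ioi] with t ht
    rw [Real.norm_eq_abs, abs_of_pos (Real.exp_pos _), Real.norm_eq_abs, abs_of_pos (Real.exp_pos _)]
    have := exp_lin_sub_cosh_le z c hz (le_of_lt (hT ▸ ht))
    simpa [neg_mul, one_mul] using this

lemma tendsto_exp_lin_sub_cosh (z c : ℝ) (hz : 0 < z) :
    Tendsto (fun t => Real.exp (c * t - z * Real.cosh t)) atTop (𝓝 0) := by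
  apply squeeze_zero_norm' _ Real.tendsto_exp_neg_atTop_nhds_zero
  filter_upwards [eventually_ge_atTop (max 1 (8 * (c + 1) / z))] with t ht
  rw [Real.norm_eq_abs, abs_of_pos (Real.exp_pos _)]
  exact exp_lin_sub_cosh_le z c hz ht

/-- Bound for the master integrand. -/
lemma master_bound (z : ℝ) (m : ℕ) (ν : ℝ) {t : ℝ} (ht : 0 ≤ t) {q : ℝ} (hq : |q| ≤ Real.exp (|ν| * t)) :
    |Real.exp (-z * Real.cosh t) * Real.sinh t ^ m * q| ≤
      Real.exp ((m + |ν|) * t - z * Real.cosh t) := by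
  have hs0 : 0 ≤ Real.sinh t := Real.sinh_nonneg_iff.2 ht
  have hs : Real.sinh t ≤ Real.exp t := by
    rw [Real.sinh_eq]; have := (Real.exp_pos (-t)).le; have := (Real.exp_pos t).le; linarith
  have h1 : Real.sinh t ^ m ≤ Real.exp t ^ m := pow_le_pow_left₀ hs0 hs m
  rw [abs_mul, abs_mul, abs_of_pos (Real.exp_pos _), abs_of_nonneg (pow_nonneg hs0 m)]
  calc Real.exp (-z * Real.cosh t) * Real.sinh t ^ m * |q|
      ≤ Real.exp (-z * Real.cosh t) * Real.exp t ^ m * Real.exp (|ν| * t) := by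
        apply mul_le_mul (mul_le_mul_of_nonneg_left h1 (Real.exp_pos _).le) hq (abs_nonneg q)
        positivity
    _ = Real.exp ((m + |ν|) * t - z * Real.cosh t) := by
        rw [← Real.exp_nat_mul, ← Real.exp_add, ← Real.exp_add]; ring_nf

lemma cosh_le_exp_abs (x : ℝ) : Real.cosh x ≤ Real.exp (|x|) := by
  rw [Real.cosh_eq]
  have h1 : Real.exp x ≤ Real.exp |x| := Real.exp_le_exp.2 (le_abs_self x)
  have h2 : Real.exp (-x) ≤ Real.exp |x| := Real.exp_le_exp.2 (neg_le_abs x)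
  linarith

lemma abs_cosh_le (ν t : ℝ) (ht : 0 ≤ t) : |Real.cosh (ν * t)| ≤ Real.exp (|ν| * t) := by
  rw [abs_of_pos (Real.cosh_pos _)]
  calc Real.cosh (ν * t) ≤ Real.exp |ν * t| := cosh_le_exp_abs _
    _ = Real.exp (|ν| * t) := by rw [abs_mul, abs_of_nonneg ht]

lemma abs_sinh_le (ν t : ℝ) (ht : 0 ≤ t) : |Real.sinh (ν * t)| ≤ Real.exp (|ν| * t) := by
  calc |Real.sinh (ν * t)| ≤ Real.cosh (ν * t) := by
        rw [Real.cosh_eq, Real.sinh_eq, abs_div, abs_of_pos (by norm_num : (0:ℝ) < 2)]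
        apply div_le_div_of_nonneg_right ?_ (by norm_num)
        · calc |Real.exp (ν*t) - Real.exp (-(ν*t))| ≤ |Real.exp (ν*t)| + |Real.exp (-(ν*t))| := abs_sub _ _
            _ = Real.exp (ν*t) + Real.exp (-(ν*t)) := by
              rw [abs_of_pos (Real.exp_pos _), abs_of_pos (Real.exp_pos _)]
    _ ≤ Real.exp (|ν * t|) := cosh_le_exp_abs _
    _ = Real.exp (|ν| * t) := by rw [abs_mul, abs_of_nonneg ht]

/-- Master integrability lemma. -/
lemma integrableOn_master (z : ℝ) (hz : 0 < z) (m : ℕ) {q : ℝ → ℝ} (hqc : Continuous q)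
    (ν : ℝ) (hq : ∀ t, 0 ≤ t → |q t| ≤ Real.exp (|ν| * t)) :
    IntegrableOn (fun t => Real.exp (-z * Real.cosh t) * Real.sinh t ^ m * q t) (Ioi (0:ℝ)) := by
  apply Integrable.mono (integrableOn_exp_lin_sub_cosh z (m + |ν|) hz)
  · have : Continuous (fun t => Real.exp (-z * Real.cosh t) * Real.sinh t ^ m * q t) := by continuity
    exact this.aestronglyMeasurable.restrict
  · filter_upwards [ae_restrict_mem measurableSet_Ioi] with t ht
    rw [Real.norm_eq_abs, Real.norm_eq_abs, abs_of_pos (Real.exp_pos _)]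
    exact master_bound z m ν (le_of_lt ht) (hq t (le_of_lt ht))

/-- Master decay lemma. -/
lemma tendsto_master (z : ℝ) (hz : 0 < z) (m : ℕ) {q : ℝ → ℝ}
    (ν : ℝ) (hq : ∀ t, 0 ≤ t → |q t| ≤ Real.exp (|ν| * t)) :
    Tendsto (fun t => Real.exp (-z * Real.cosh t) * Real.sinh t ^ m * q t) atTop (𝓝 0) := by
  apply squeeze_zero_norm' _ (tendsto_exp_lin_sub_cosh z (m + |ν|) hz)
  filter_upwards [eventually_ge_atTop (0:ℝ)] with t ht
  exact master_bound z m ν ht (hq t ht)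

/-- `S`-type integral. -/
noncomputable def SI (z : ℝ) (m : ℕ) : ℝ := ∫ t in Ioi (0:ℝ), Real.exp (-z * Real.cosh t) * Real.sinh t ^ m

/-- `T`-type integral. -/
noncomputable def TI (z : ℝ) (m : ℕ) : ℝ :=
  ∫ t in Ioi (0:ℝ), Real.exp (-z * Real.cosh t) * Real.sinh t ^ m * Real.cosh t

lemma intS (z : ℝ) (hz : 0 < z) (m : ℕ) :
    IntegrableOn (fun t => Real.exp (-z * Real.cosh t) * Real.sinh t ^ m) (Ioi (0:ℝ)) := by
  have := integrableOn_master z hz m (continuous_const : Continuous (fun _ : ℝ => (1:ℝ)))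
    0 (fun t ht => by norm_num)
  simpa using this

lemma intT (z : ℝ) (hz : 0 < z) (m : ℕ) :
    IntegrableOn (fun t => Real.exp (-z * Real.cosh t) * Real.sinh t ^ m * Real.cosh t) (Ioi (0:ℝ)) := by
  exact integrableOn_master z hz m Real.continuous_cosh 1
    (fun t ht => by simpa using abs_cosh_le 1 t ht)

lemma intC (z : ℝ) (hz : 0 < z) (ν : ℝ) :
    IntegrableOn (fun t => Real.exp (-z * Real.cosh t) * Real.cosh (ν * t)) (Ioi (0:ℝ)) := by
  have := integrableOn_master z hz 0 (by continuity : Continuous (fun t : ℝ => Real.cosh (ν * t)))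
    ν (fun t ht => abs_cosh_le ν t ht)
  simpa using this

lemma intSsinh (z : ℝ) (hz : 0 < z) (ν : ℝ) :
    IntegrableOn (fun t => Real.exp (-z * Real.cosh t) * (Real.sinh t * Real.sinh (ν * t))) (Ioi (0:ℝ)) := by
  have := integrableOn_master z hz 1 (by continuity : Continuous (fun t : ℝ => Real.sinh (ν * t)))
    ν (fun t ht => abs_sinh_le ν t ht)
  simpa [mul_assoc] using this

lemma besselK_eq_intC (ν z : ℝ) :
    besselK ν z = ∫ t in Ioi (0:ℝ), Real.exp (-z * Real.cosh t) * Real.cosh (ν * t) := rfl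

section derivs

lemma hasDerivAt_exp_neg_cosh (z t : ℝ) :
    HasDerivAt (fun t => Real.exp (-z * Real.cosh t)) (Real.exp (-z * Real.cosh t) * (-z * Real.sinh t)) t := by
  have h1 : HasDerivAt (fun t : ℝ => -z * Real.cosh t) (-z * Real.sinh t) t :=
    (Real.hasDerivAt_cosh t).const_mul (-z)
  exact h1.exp

lemma deriv1 (z : ℝ) (n : ℕ) (t : ℝ) :
    HasDerivAt (fun t => Real.exp (-z * Real.cosh t) * Real.sinh t ^ (n+1))
      (((n:ℝ)+1) * (Real.exp (-z * Real.cosh t) * Real.sinh t ^ n * Real.cosh t)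
        - z * (Real.exp (-z * Real.cosh t) * Real.sinh t ^ (n+2))) t := by
  have h2 : HasDerivAt (fun t : ℝ => Real.sinh t ^ (n+1))
      ((n+1 : ℕ) * Real.sinh t ^ n * Real.cosh t) t := by
    simpa using (Real.hasDerivAt_sinh t).fun_pow (n+1)
  have := (hasDerivAt_exp_neg_cosh z t).fun_mul h2
  refine this.congr_deriv ?_
  push_cast
  ring

lemma deriv2 (z : ℝ) (n : ℕ) (t : ℝ) :
    HasDerivAt (fun t => Real.exp (-z * Real.cosh t) * Real.sinh t ^ (n+1) * Real.cosh t)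
      (((n:ℝ)+1) * (Real.exp (-z * Real.cosh t) * Real.sinh t ^ n * Real.cosh t ^ 2)
        + Real.exp (-z * Real.cosh t) * Real.sinh t ^ (n+2)
        - z * (Real.exp (-z * Real.cosh t) * Real.sinh t ^ (n+2) * Real.cosh t)) t := by
  have h2 : HasDerivAt (fun t : ℝ => Real.sinh t ^ (n+1))
      ((n+1 : ℕ) * Real.sinh t ^ n * Real.cosh t) t := by
    simpa using (Real.hasDerivAt_sinh t).fun_pow (n+1)
  have := ((hasDerivAt_exp_neg_cosh z t).fun_mul h2).fun_mul (Real.hasDerivAt_cosh t)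
  refine this.congr_deriv ?_
  push_cast
  ring

lemma deriv2zero (z : ℝ) (t : ℝ) :
    HasDerivAt (fun t => Real.exp (-z * Real.cosh t) * Real.cosh t)
      (Real.exp (-z * Real.cosh t) * Real.sinh t
        - z * (Real.exp (-z * Real.cosh t) * Real.sinh t * Real.cosh t)) t := by
  have := (hasDerivAt_exp_neg_cosh z t).fun_mul (Real.hasDerivAt_cosh t)
  refine this.congr_deriv ?_
  ring

lemma deriv3 (z ν : ℝ) (t : ℝ) :
    HasDerivAt (fun t => Real.exp (-z * Real.cosh t) * Real.sinh (ν * t))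
      (ν * (Real.exp (-z * Real.cosh t) * Real.cosh (ν * t))
        - z * (Real.exp (-z * Real.cosh t) * (Real.sinh t * Real.sinh (ν * t)))) t := by
  have h2' : HasDerivAt (fun y : ℝ => ν * y) ν t := by simpa using (hasDerivAt_id t).const_mul ν
  have h2 : HasDerivAt (fun t : ℝ => Real.sinh (ν * t)) (Real.cosh (ν * t) * ν) t := by
    have := (Real.hasDerivAt_sinh (ν*t)).comp t h2'
    simpa [Function.comp_def] using this
  have := (hasDerivAt_exp_neg_cosh z t).fun_mul h2
  refine this.congr_deriv ?_
  ring

lemma deriv0 (z : ℝ) (hz : z ≠ 0) (t : ℝ) :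
    HasDerivAt (fun t => -Real.exp (-z * Real.cosh t) / z)
      (Real.exp (-z * Real.cosh t) * Real.sinh t) t := by
  have := ((hasDerivAt_exp_neg_cosh z t).fun_neg).div_const z
  refine this.congr_deriv ?_
  field_simp

end derivs

section rec

variable {z : ℝ} (hz : 0 < z)

include hz

lemma tendS (m : ℕ) : Tendsto (fun t => Real.exp (-z * Real.cosh t) * Real.sinh t ^ m) atTop (𝓝 0) := by
  have := tendsto_master z hz m 0 (q := fun _ => 1) (fun t ht => by norm_num)
  simpa using this

lemma tendT (m : ℕ) :
    Tendsto (fun t => Real.exp (-z * Real.cosh t) * Real.sinh t ^ m * Real.cosh t) atTop (𝓝 0) :=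
  tendsto_master z hz m 1 (q := Real.cosh) (fun t ht => by simpa using abs_cosh_le 1 t ht)

lemma tendSsinh (ν : ℝ) :
    Tendsto (fun t => Real.exp (-z * Real.cosh t) * Real.sinh (ν * t)) atTop (𝓝 0) := by
  have := tendsto_master z hz 0 ν (q := fun t => Real.sinh (ν * t)) (fun t ht => abs_sinh_le ν t ht)
  simpa using this

/-- Recurrence (i): `(n+1) T_n = z S_{n+2}`. -/
lemma recA (n : ℕ) : ((n:ℝ)+1) * TI z n = z * SI z (n+2) := by
  have hint : IntegrableOn (fun t => ((n:ℝ)+1) * (Real.exp (-z * Real.cosh t) * Real.sinh t ^ n * Real.cosh t)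
      - z * (Real.exp (-z * Real.cosh t) * Real.sinh t ^ (n+2))) (Ioi (0:ℝ)) :=
    ((intT z hz n).const_mul _).sub ((intS z hz (n+2)).const_mul _)
  have hftc := integral_Ioi_of_hasDerivAt_of_tendsto' (a := 0) (m := 0)
    (fun x _ => deriv1 z n x) hint (tendS hz (n+1))
  have hsplit : (∫ t in Ioi (0:ℝ), (((n:ℝ)+1) * (Real.exp (-z * Real.cosh t) * Real.sinh t ^ n * Real.cosh t)
      - z * (Real.exp (-z * Real.cosh t) * Real.sinh t ^ (n+2))))
      = ((n:ℝ)+1) * TI z n - z * SI z (n+2) := by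
    rw [integral_sub ((intT z hz n).const_mul _) ((intS z hz (n+2)).const_mul _),
      integral_const_mul, integral_const_mul]
    rfl
  rw [hsplit] at hftc
  simp only [Real.sinh_zero, zero_pow (Nat.succ_ne_zero n), mul_zero, sub_zero] at hftc
  linarith

/-- Recurrence (ii): `(n+1) S_n + (n+2) S_{n+2} = z T_{n+2}`. -/
lemma recB (n : ℕ) :
    ((n:ℝ)+1) * SI z n + ((n:ℝ)+2) * SI z (n+2) = z * TI z (n+2) := by
  have hint : IntegrableOn (fun t =>
      (((n:ℝ)+1) * (Real.exp (-z * Real.cosh t) * Real.sinh t ^ n)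
        + ((n:ℝ)+2) * (Real.exp (-z * Real.cosh t) * Real.sinh t ^ (n+2)))
      - z * (Real.exp (-z * Real.cosh t) * Real.sinh t ^ (n+2) * Real.cosh t)) (Ioi (0:ℝ)) :=
    (((intS z hz n).const_mul _).add ((intS z hz (n+2)).const_mul _)).sub ((intT z hz (n+2)).const_mul _)
  have heq : ∀ t : ℝ,
      (((n:ℝ)+1) * (Real.exp (-z * Real.cosh t) * Real.sinh t ^ n * Real.cosh t ^ 2)
        + Real.exp (-z * Real.cosh t) * Real.sinh t ^ (n+2)
        - z * (Real.exp (-z * Real.cosh t) * Real.sinh t ^ (n+2) * Real.cosh t))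
      = (((n:ℝ)+1) * (Real.exp (-z * Real.cosh t) * Real.sinh t ^ n)
        + ((n:ℝ)+2) * (Real.exp (-z * Real.cosh t) * Real.sinh t ^ (n+2)))
      - z * (Real.exp (-z * Real.cosh t) * Real.sinh t ^ (n+2) * Real.cosh t) := by
    intro t
    rw [Real.cosh_sq]
    ring
  have hftc := integral_Ioi_of_hasDerivAt_of_tendsto' (a := 0) (m := 0)
    (fun x _ => (heq x) ▸ deriv2 z n x) hint (tendT hz (n+1))
  have hsplit : (∫ t in Ioi (0:ℝ), ((((n:ℝ)+1) * (Real.exp (-z * Real.cosh t) * Real.sinh t ^ n)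
        + ((n:ℝ)+2) * (Real.exp (-z * Real.cosh t) * Real.sinh t ^ (n+2)))
      - z * (Real.exp (-z * Real.cosh t) * Real.sinh t ^ (n+2) * Real.cosh t)))
      = (((n:ℝ)+1) * SI z n + ((n:ℝ)+2) * SI z (n+2)) - z * TI z (n+2) := by
    have hadd : IntegrableOn (fun t => ((n:ℝ)+1) * (Real.exp (-z * Real.cosh t) * Real.sinh t ^ n)
        + ((n:ℝ)+2) * (Real.exp (-z * Real.cosh t) * Real.sinh t ^ (n+2))) (Ioi (0:ℝ)) := by
      exact ((intS z hz n).const_mul _).add ((intS z hz (n+2)).const_mul _)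
    rw [integral_sub hadd ((intT z hz (n+2)).const_mul _),
      integral_add ((intS z hz n).const_mul _) ((intS z hz (n+2)).const_mul _),
      integral_const_mul, integral_const_mul, integral_const_mul]
    rfl
  rw [hsplit] at hftc
  simp only [Real.sinh_zero, zero_pow (Nat.succ_ne_zero n), mul_zero, zero_mul, sub_zero, Real.cosh_zero] at hftc
  linarith

/-- `S_1 = e^{-z}/z`. -/
lemma S1val : SI z 1 = Real.exp (-z) / z := by
  have hftc := integral_Ioi_of_hasDerivAt_of_tendsto' (a := 0) (m := 0)
    (fun x _ => deriv0 z hz.ne' x) (by simpa [pow_one] using intS z hz 1) ?_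
  · have h0 : -Real.exp (-z * Real.cosh 0) / z = -Real.exp (-z) / z := by simp
    rw [h0] at hftc
    have : SI z 1 = 0 - -Real.exp (-z)/z := by simpa [SI, pow_one] using hftc
    rw [this]; ring
  · have := (tendS hz 0).div_const z
    simp only [pow_zero, mul_one, zero_div] at this
    have h2 := this.neg
    rw [neg_zero] at h2
    exact h2.congr (fun t => by ring)

/-- Special relation: `S_1 - z T_1 = -e^{-z}`. -/
lemma recSpecial : SI z 1 - z * TI z 1 = -Real.exp (-z) := by
  have hint : IntegrableOn (fun t => Real.exp (-z * Real.cosh t) * Real.sinh t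
      - z * (Real.exp (-z * Real.cosh t) * Real.sinh t * Real.cosh t)) (Ioi (0:ℝ)) := by
    refine Integrable.sub (by simpa [pow_one, IntegrableOn] using intS z hz 1) ?_
    simpa [pow_one] using (intT z hz 1).const_mul z
  have hftc := integral_Ioi_of_hasDerivAt_of_tendsto' (a := 0) (m := 0)
    (fun x _ => deriv2zero z x) hint (by simpa [pow_zero, one_mul] using tendT hz 0)
  rw [integral_sub (by simpa [pow_one, IntegrableOn] using intS z hz 1)
      (by simpa [pow_one, IntegrableOn] using (intT z hz 1).const_mul z), integral_const_mul] at hftc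
  simp only [Real.cosh_zero, mul_one, Real.sinh_zero, zero_sub] at hftc
  have h1 : (∫ t in Ioi (0:ℝ), Real.exp (-z * Real.cosh t) * Real.sinh t) = SI z 1 := by
    simp [SI, pow_one]
  have h2 : (∫ t in Ioi (0:ℝ), Real.exp (-z * Real.cosh t) * Real.sinh t * Real.cosh t) = TI z 1 := by
    simp [TI, pow_one]
  rw [h1, h2] at hftc
  linarith

end rec

section besselrec

lemma sinh_mul_sinh (ν t : ℝ) :
    Real.sinh t * Real.sinh (ν * t) = (Real.cosh ((ν+1)*t) - Real.cosh ((ν-1)*t))/2 := by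
  rw [show (ν+1)*t = ν*t + t by ring, show (ν-1)*t = ν*t - t by ring,
    Real.cosh_add, Real.cosh_sub]
  ring

/-- Bessel recurrence: `ν K_ν = (z/2)(K_{ν+1} - K_{ν-1})`. -/
lemma recC {z : ℝ} (hz : 0 < z) (ν : ℝ) :
    ν * besselK ν z = (z/2) * (besselK (ν+1) z - besselK (ν-1) z) := by
  have hint : IntegrableOn (fun t => ν * (Real.exp (-z * Real.cosh t) * Real.cosh (ν * t))
      - z * (Real.exp (-z * Real.cosh t) * (Real.sinh t * Real.sinh (ν * t)))) (Ioi (0:ℝ)) :=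
    ((intC z hz ν).const_mul _).sub ((intSsinh z hz ν).const_mul _)
  have hftc := integral_Ioi_of_hasDerivAt_of_tendsto' (a := 0) (m := 0)
    (fun x _ => deriv3 z ν x) hint (tendSsinh hz ν)
  have hsplit : (∫ t in Ioi (0:ℝ), (ν * (Real.exp (-z * Real.cosh t) * Real.cosh (ν * t))
      - z * (Real.exp (-z * Real.cosh t) * (Real.sinh t * Real.sinh (ν * t)))))
      = ν * besselK ν z
        - z * ∫ t in Ioi (0:ℝ), Real.exp (-z * Real.cosh t) * (Real.sinh t * Real.sinh (ν * t)) := by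
    rw [integral_sub ((intC z hz ν).const_mul _) ((intSsinh z hz ν).const_mul _),
      integral_const_mul, integral_const_mul]
    rfl
  rw [hsplit] at hftc
  simp only [Real.sinh_zero, mul_zero, sub_zero] at hftc
  have hprod : (∫ t in Ioi (0:ℝ), Real.exp (-z * Real.cosh t) * (Real.sinh t * Real.sinh (ν * t)))
      = (besselK (ν+1) z - besselK (ν-1) z)/2 := by
    have heq : (fun t => Real.exp (-z * Real.cosh t) * (Real.sinh t * Real.sinh (ν * t)))
        = fun t => ((1:ℝ)/2) * (Real.exp (-z * Real.cosh t) * Real.cosh ((ν+1) * t))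
          - ((1:ℝ)/2) * (Real.exp (-z * Real.cosh t) * Real.cosh ((ν-1) * t)) := by
      funext t
      rw [sinh_mul_sinh]
      ring
    rw [heq, integral_sub ((intC z hz (ν+1)).const_mul _) ((intC z hz (ν-1)).const_mul _),
      integral_const_mul, integral_const_mul]
    rw [besselK_eq_intC, besselK_eq_intC]
    ring
  rw [hprod] at hftc
  linarith

lemma besselK_neg (ν z : ℝ) : besselK (-ν) z = besselK ν z := by
  unfold besselK
  congr 1
  funext t
  rw [show -ν * t = -(ν*t) by ring, Real.cosh_neg]

lemma sinh_half_image : (fun t : ℝ => Real.sinh (t/2)) '' (Ioi 0) = Ioi (0:ℝ) := by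
  ext u
  constructor
  · rintro ⟨t, ht, rfl⟩
    exact Real.sinh_pos_iff.2 (by simpa using half_pos (mem_Ioi.1 ht))
  · intro hu
    refine ⟨2 * Real.arsinh u, ?_, ?_⟩
    · have : 0 < Real.arsinh u := Real.arsinh_pos_iff.2 hu
      simpa using this
    · have h : (2:ℝ) * Real.arsinh u / 2 = Real.arsinh u := by ring
      simp only [h, Real.sinh_arsinh]

lemma cosh_eq_sinh_half (t : ℝ) : Real.cosh t = 2 * Real.sinh (t/2)^2 + 1 := by
  rw [show t = 2 * (t/2) by ring, Real.cosh_two_mul, Real.cosh_sq,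
    show 2 * (t/2) / 2 = t/2 by ring]
  ring

lemma besselK_half {z : ℝ} (hz : 0 < z) :
    besselK (1/2) z = Real.sqrt (π/(2*z)) * Real.exp (-z) := by
  have hderiv : ∀ t ∈ Ioi (0:ℝ), HasDerivWithinAt (fun t : ℝ => Real.sinh (t/2))
      (Real.cosh (t/2) * (1/2)) (Ioi 0) t := by
    intro t _
    have h1 : HasDerivAt (fun t : ℝ => t/2) (1/2) t := by
      simpa using (hasDerivAt_id t).div_const 2
    exact ((Real.hasDerivAt_sinh (t/2)).comp t h1).hasDerivWithinAt
  have hinj : InjOn (fun t : ℝ => Real.sinh (t/2)) (Ioi 0) := by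
    intro a _ b _ h
    have := Real.sinh_injective h
    linarith
  have hsub := integral_image_eq_integral_abs_deriv_smul measurableSet_Ioi hderiv hinj
    (fun u => Real.exp (-(2*z) * u^2))
  rw [sinh_half_image, integral_gaussian_Ioi] at hsub
  have hcongr : (∫ t in Ioi (0:ℝ), |Real.cosh (t/2) * (1/2)| • Real.exp (-(2*z) * Real.sinh (t/2)^2))
      = ∫ t in Ioi (0:ℝ), (Real.exp (z) / 2) * (Real.exp (-z * Real.cosh t) * Real.cosh ((1/2) * t)) := by
    apply integral_congr_ae
    filter_upwards with t
    have hee : Real.exp z * Real.exp (-z) = 1 := by rw [← Real.exp_add]; simp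
    have hexp : Real.exp (-z * Real.cosh t)
        = Real.exp (-z) * Real.exp (-(2*z) * Real.sinh (t/2)^2) := by
      rw [← Real.exp_add, cosh_eq_sinh_half t]
      ring_nf
    rw [abs_of_pos (by positivity : (0:ℝ) < Real.cosh (t/2) * (1/2)), smul_eq_mul,
      hexp, show (1:ℝ)/2 * t = t/2 by ring]
    linear_combination (-(Real.cosh (t/2) * Real.exp (-(2*z) * Real.sinh (t/2)^2) / 2)) * hee
  rw [hcongr, integral_const_mul] at hsub
  rw [← besselK_eq_intC] at hsub
  have hee : Real.exp z * Real.exp (-z) = 1 := by rw [← Real.exp_add]; simp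
  have h2 : besselK (1/2) z = 2 * Real.exp (-z) * (Real.sqrt (π/(2*z))/2) := by
    linear_combination (-(2*Real.exp (-z))) * hsub - besselK (1/2) z * hee
  rw [h2]; ring

section claimA

lemma SI0 (z : ℝ) : SI z 0 = besselK 0 z := by
  unfold SI besselK
  congr 1
  funext t
  simp

lemma TI0 (z : ℝ) : TI z 0 = besselK 1 z := by
  unfold TI besselK
  congr 1
  funext t
  simp

lemma sqrt_helper {z : ℝ} (hz : 0 < z) :
    Real.sqrt π * Real.sqrt (z/2) / z = Real.sqrt (π/(2*z)) := by
  have hL : 0 ≤ Real.sqrt π * Real.sqrt (z/2) / z := by positivity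
  have hsq : (Real.sqrt π * Real.sqrt (z/2) / z)^2 = π/(2*z) := by
    rw [div_pow, mul_pow, Real.sq_sqrt pi_pos.le, Real.sq_sqrt (by positivity : (0:ℝ) ≤ z/2)]
    field_simp
  rw [← hsq, Real.sqrt_sq hL]

lemma rpow_half_eq_sqrt (x : ℝ) : x ^ ((1:ℝ)/2) = Real.sqrt x :=
  (Real.sqrt_eq_rpow x).symm

/-- Claim A: the key identity relating `S`-integrals to Bessel functions. -/
lemma claimA (m : ℕ) : ∀ z : ℝ, 0 < z →
    Real.sqrt π * (z/2) ^ ((m:ℝ)/2) * SI z m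
      = Real.Gamma (((m:ℝ)+1)/2) * besselK ((m:ℝ)/2) z := by
  induction m using Nat.strong_induction_on with
  | _ m ih =>
    match m, ih with
    | 0, _ =>
      intro z hz
      norm_num [SI0 z, Real.Gamma_one_half_eq]
    | 1, _ =>
      intro z hz
      rw [S1val hz]
      norm_num [Real.Gamma_one]
      rw [besselK_half hz, rpow_half_eq_sqrt (z/2)]
      linear_combination Real.exp (-z) * sqrt_helper hz
    | 2, _ =>
      intro z hz
      have h1 := recA hz 0
      rw [TI0] at h1
      norm_num at h1 ⊢
      rw [show (3:ℝ)/2 = 1/2 + 1 by norm_num,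
        Real.Gamma_add_one (by norm_num), Real.Gamma_one_half_eq]
      linear_combination (-(Real.sqrt π / 2)) * h1
    | 3, _ =>
      intro z hz
      have h1 := recSpecial hz
      have h2 := recA hz 1
      norm_num at h2
      have hS1' : z * SI z 1 = Real.exp (-z) := by
        rw [S1val hz]; field_simp
      have hS3 : z^3 * SI z 3 = 2*Real.exp (-z)*(1+z) := by
        linear_combination (-(z^2))*h2 - 2*z*h1 + 2*hS1'
      have hS3' : SI z 3 = 2*Real.exp (-z)*(1+z)/z^3 := by
        rw [eq_div_iff (by positivity)]; linear_combination hS3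
      have hC := recC hz (1/2)
      rw [show (1:ℝ)/2 - 1 = -(1/2) by norm_num, besselK_neg] at hC
      have hB32 : besselK ((1:ℝ)/2+1) z = (z+1) * besselK (1/2) z / z := by
        rw [eq_div_iff hz.ne']; linear_combination (-2)*hC
      push_cast
      rw [show ((3:ℝ))/2 = (1:ℝ)/2 + 1 by norm_num,
        Real.rpow_add (by positivity : (0:ℝ) < z/2), Real.rpow_one,
        rpow_half_eq_sqrt (z/2), hS3', hB32, besselK_half hz,
        show ((3:ℝ)+1)/2 = 2 by norm_num, Real.Gamma_two, ← sqrt_helper hz]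
      field_simp
      ring
    | (k+4), ih =>
      intro z hz
      have H0 := ih k (by omega) z hz
      have H2 := ih (k+2) (by omega) z hz
      have hpos : (0:ℝ) < z/2 := by positivity
      have hrp : (0:ℝ) < (z/2) ^ ((k:ℝ)/2) := Real.rpow_pos_of_pos hpos _
      have hGpos : (0:ℝ) < Real.Gamma (((k:ℝ)+1)/2) := Real.Gamma_pos_of_pos (by positivity)
      -- rewrite H2
      have e2 : ((k+2:ℕ):ℝ)/2 = (k:ℝ)/2 + 1 := by push_cast; ring
      have e4 : (((k+2:ℕ):ℝ)+1)/2 = ((k:ℝ)+1)/2 + 1 := by push_cast; ring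
      rw [e2, e4, Real.rpow_add hpos, Real.rpow_one,
        Real.Gamma_add_one (by positivity : ((k:ℝ)+1)/2 ≠ 0)] at H2
      -- S recurrence
      have h1 := recB hz k
      have h2 := recA hz (k+2)
      have ek : k+2+2 = k+4 := by omega
      rw [ek] at h2
      push_cast at h2
      have hS : z^2 * SI z (k+4) = ((k:ℝ)+3) * (((k:ℝ)+1) * SI z k + ((k:ℝ)+2) * SI z (k+2)) := by
        linear_combination (-z)*h2 - ((k:ℝ)+3)*h1
      have hs4 : SI z (k+4)
          = ((k:ℝ)+3) * (((k:ℝ)+1) * SI z k + ((k:ℝ)+2) * SI z (k+2)) / z^2 := by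
        rw [eq_div_iff (by positivity)]; linear_combination hS
      -- Bessel recurrence
      have hC := recC hz ((k:ℝ)/2 + 1)
      rw [show (k:ℝ)/2+1+1 = (k:ℝ)/2+2 by ring, show (k:ℝ)/2+1-1 = (k:ℝ)/2 by ring] at hC
      have hc4 : besselK ((k:ℝ)/2+2) z
          = (z * besselK ((k:ℝ)/2) z + ((k:ℝ)+2) * besselK ((k:ℝ)/2+1) z)/z := by
        rw [eq_div_iff hz.ne']; linear_combination (-2)*hC
      -- express S's
      have hs0 : SI z k = Real.Gamma (((k:ℝ)+1)/2) * besselK ((k:ℝ)/2) z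
          / (Real.sqrt π * (z/2)^((k:ℝ)/2)) := by
        rw [eq_div_iff (by positivity)]; linear_combination H0
      have hs2 : SI z (k+2) = (((k:ℝ)+1)/2) * Real.Gamma (((k:ℝ)+1)/2) * besselK ((k:ℝ)/2+1) z
          / (Real.sqrt π * (z/2)^((k:ℝ)/2) * (z/2)) := by
        rw [eq_div_iff (by positivity)]; linear_combination H2
      -- rewrite goal
      have e1 : ((k+4:ℕ):ℝ)/2 = (k:ℝ)/2 + 2 := by push_cast; ring
      have e3 : (((k+4:ℕ):ℝ)+1)/2 = (((k:ℝ)+1)/2 + 1) + 1 := by push_cast; ring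
      have hp2 : (z/2:ℝ) ^ ((2:ℝ)) = (z/2)*(z/2) := by
        have h := Real.rpow_natCast (z/2) 2
        rw [show ((2:ℕ):ℝ) = (2:ℝ) by norm_num] at h
        rw [h]; ring
      rw [e1, e3, Real.rpow_add hpos, hp2,
        Real.Gamma_add_one (by positivity : ((k:ℝ)+1)/2 + 1 ≠ 0),
        Real.Gamma_add_one (by positivity : ((k:ℝ)+1)/2 ≠ 0),
        hs4, hs0, hs2, hc4]
      field_simp
      ring

end claimA

open scoped ENNReal

section convolution

/-- The chi-squared density. -/
noncomputable def chiDensity (l : ℕ) (x : ℝ) : ℝ :=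
  if 0 ≤ x then
      x ^ ((l : ℝ) / 2 - 1) * Real.exp (-x / 2) / (2 ^ ((l : ℝ) / 2) * Real.Gamma (l / 2))
    else 0

lemma chiDensity_nonneg (l : ℕ) (hl : 0 < l) (x : ℝ) : 0 ≤ chiDensity l x := by
  unfold chiDensity
  split_ifs with h
  · have hG : 0 < Real.Gamma ((l:ℝ)/2) := Real.Gamma_pos_of_pos (by positivity)
    positivity
  · exact le_refl _

lemma chiDensity_measurable (l : ℕ) : Measurable (chiDensity l) := by
  unfold chiDensity
  apply Measurable.ite measurableSet_Ici <;> fun_prop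

lemma chiDensity_neg (l : ℕ) {x : ℝ} (hx : x < 0) : chiDensity l x = 0 := by
  unfold chiDensity
  rw [if_neg (not_le.2 hx)]

/-- 1-d change of variables for lower Lebesgue integrals. -/
lemma lintegral_image_eq_lintegral_abs_deriv_mul' {s : Set ℝ} {f f' : ℝ → ℝ}
    (hs : MeasurableSet s) (hf' : ∀ x ∈ s, HasDerivWithinAt f (f' x) s x)
    (hf : InjOn f s) (g : ℝ → ℝ≥0∞) :
    ∫⁻ x in f '' s, g x = ∫⁻ x in s, ENNReal.ofReal |f' x| * g (f x) := by
  simpa only [ContinuousLinearMap.det_toSpanSingleton] using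
    MeasureTheory.lintegral_image_eq_lintegral_abs_det_fderiv_mul volume hs
      (fun x hx => (hf' x hx).hasFDerivWithinAt) hf g

lemma phi_image {w : ℝ} (hw : 0 < w) :
    (fun t : ℝ => w/2 * (Real.cosh t - 1)) '' (Ioi 0) = Ioi (0:ℝ) := by
  ext u
  constructor
  · rintro ⟨t, ht, rfl⟩
    have h1 : 1 < Real.cosh t := Real.one_lt_cosh.2 (ne_of_gt ht)
    have : 0 < Real.cosh t - 1 := by linarith
    exact mem_Ioi.2 (by positivity)
  · intro hu
    have hu' : (0:ℝ) < u := hu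
    refine ⟨2 * Real.arsinh (Real.sqrt (u/w)), ?_, ?_⟩
    · have h1 : 0 < Real.sqrt (u/w) := Real.sqrt_pos.2 (by positivity)
      have := Real.arsinh_pos_iff.2 h1
      simpa using this
    · have hch : Real.cosh (2 * Real.arsinh (Real.sqrt (u/w)))
          = 2 * Real.sinh (Real.arsinh (Real.sqrt (u/w)))^2 + 1 := by
        rw [cosh_eq_sinh_half]
        norm_num
      show w/2 * (Real.cosh (2 * Real.arsinh (Real.sqrt (u/w))) - 1) = u
      rw [hch, Real.sinh_arsinh, Real.sq_sqrt (by positivity : (0:ℝ) ≤ u/w)]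
      field_simp
      ring

lemma phi_injOn {w : ℝ} (hw : 0 < w) :
    InjOn (fun t : ℝ => w/2 * (Real.cosh t - 1)) (Ioi 0) := by
  intro a ha b hb h
  simp only at h
  have hcc : Real.cosh a = Real.cosh b := by
    have h2 : w/2 ≠ 0 := by positivity
    have h3 := mul_left_cancel₀ h2 h
    linarith
  have habs : |a| = |b| := by
    by_contra hne
    rcases lt_or_gt_of_ne hne with hlt | hgt
    · exact absurd hcc (ne_of_lt (Real.cosh_lt_cosh.2 hlt))
    · exact absurd hcc (ne_of_gt (Real.cosh_lt_cosh.2 hgt))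
  rwa [abs_of_pos ha, abs_of_pos hb] at habs

end convolution

section rho

noncomputable def Dl (l : ℕ) : ℝ := 2 ^ ((l:ℝ)/2) * Real.Gamma ((l:ℝ)/2)

lemma Dl_pos (l : ℕ) (hl : 0 < l) : 0 < Dl l := by
  unfold Dl
  have hG : 0 < Real.Gamma ((l:ℝ)/2) := Real.Gamma_pos_of_pos (by positivity)
  positivity

lemma dens_prod (l : ℕ) {w y : ℝ} (hw : 0 < w) (hy : 0 < y) :
    chiDensity l (w+y) * chiDensity l y
      = ((w+y) ^ ((l:ℝ)/2 - 1) * y ^ ((l:ℝ)/2 - 1)) * Real.exp (-w/2 - y) / (Dl l)^2 := by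
  unfold chiDensity Dl
  rw [if_pos (by positivity : (0:ℝ) ≤ w + y), if_pos hy.le]
  have hexp : Real.exp (-(w+y)/2) * Real.exp (-y/2) = Real.exp (-w/2 - y) := by
    rw [← Real.exp_add]; congr 1; ring
  rw [div_mul_div_comm, ← pow_two,
    show (w+y)^((l:ℝ)/2-1) * Real.exp (-(w+y)/2) * (y^((l:ℝ)/2-1) * Real.exp (-y/2))
      = (w+y)^((l:ℝ)/2-1) * y^((l:ℝ)/2-1) * (Real.exp (-(w+y)/2) * Real.exp (-y/2)) by ring, hexp]

/-- Pointwise form of the substituted integrand. -/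
lemma subst_pointwise (l : ℕ) (hl : 0 < l) {w t : ℝ} (hw : 0 < w) (ht : 0 < t) :
    (w/2 * Real.sinh t) *
      (((w + w/2*(Real.cosh t - 1)) ^ ((l:ℝ)/2 - 1) * (w/2*(Real.cosh t - 1)) ^ ((l:ℝ)/2 - 1))
        * Real.exp (-w/2 - w/2*(Real.cosh t - 1)) / (Dl l)^2)
      = ((w/2)^((l:ℝ)-1)/(Dl l)^2) * (Real.exp (-(w/2) * Real.cosh t) * Real.sinh t ^ (l-1 : ℕ)) := by
  have hs : 0 < Real.sinh t := Real.sinh_pos_iff.2 ht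
  have hc1 : 1 < Real.cosh t := Real.one_lt_cosh.2 (ne_of_gt ht)
  have hbase : (0:ℝ) < w/2 * Real.sinh t := by positivity
  have e2 : Real.exp (-w/2 - w/2*(Real.cosh t - 1)) = Real.exp (-(w/2) * Real.cosh t) := by
    congr 1; ring
  have e3 : (w + w/2*(Real.cosh t - 1)) * (w/2*(Real.cosh t - 1))
      = (w/2 * Real.sinh t)^2 := by
    linear_combination ((w/2)^2) * Real.cosh_sq t
  have hP : (w + w/2*(Real.cosh t - 1)) ^ ((l:ℝ)/2 - 1) * (w/2*(Real.cosh t - 1)) ^ ((l:ℝ)/2 - 1)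
      = (w/2 * Real.sinh t) ^ ((2:ℝ) * ((l:ℝ)/2 - 1)) := by
    rw [← Real.mul_rpow (by nlinarith) (by nlinarith), e3,
      ← Real.rpow_natCast (w/2 * Real.sinh t) 2, ← Real.rpow_mul hbase.le]
    norm_num
  have hfull : (w/2 * Real.sinh t) * (w/2 * Real.sinh t) ^ ((2:ℝ) * ((l:ℝ)/2 - 1))
      = (w/2 * Real.sinh t) ^ ((l:ℝ) - 1) := by
    nth_rewrite 1 [← Real.rpow_one (w/2 * Real.sinh t)]
    rw [← Real.rpow_add hbase, show 1 + (2:ℝ) * ((l:ℝ)/2 - 1) = (l:ℝ) - 1 by ring]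
  have hcast : ((l-1:ℕ):ℝ) = (l:ℝ) - 1 := by
    rw [Nat.cast_sub hl]; norm_num
  have hsplit2 : (w/2 * Real.sinh t) ^ ((l:ℝ) - 1)
      = (w/2)^((l:ℝ)-1) * Real.sinh t ^ (l-1 : ℕ) := by
    rw [Real.mul_rpow (by positivity) hs.le]
    congr 1
    rw [← Real.rpow_natCast (Real.sinh t) (l-1), hcast]
  calc (w/2 * Real.sinh t) *
      (((w + w/2*(Real.cosh t - 1)) ^ ((l:ℝ)/2 - 1) * (w/2*(Real.cosh t - 1)) ^ ((l:ℝ)/2 - 1))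
        * Real.exp (-w/2 - w/2*(Real.cosh t - 1)) / (Dl l)^2)
      = ((w/2 * Real.sinh t) * (w/2 * Real.sinh t) ^ ((2:ℝ) * ((l:ℝ)/2 - 1)))
        * Real.exp (-(w/2) * Real.cosh t) / (Dl l)^2 := by rw [hP, e2]; ring
    _ = ((w/2)^((l:ℝ)-1) * Real.sinh t ^ (l-1 : ℕ)) * Real.exp (-(w/2) * Real.cosh t) / (Dl l)^2 := by
        rw [hfull, hsplit2]
    _ = ((w/2)^((l:ℝ)-1)/(Dl l)^2) * (Real.exp (-(w/2) * Real.cosh t) * Real.sinh t ^ (l-1 : ℕ)) := by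
        ring

end rho

section rhoE

/-- The (ENNReal) convolution density of the difference. -/
noncomputable def rhoE (l : ℕ) (w : ℝ) : ℝ≥0∞ :=
  ∫⁻ y, ENNReal.ofReal (chiDensity l (w+y)) * ENNReal.ofReal (chiDensity l y)

/-- The target density. -/
noncomputable def targetDens (l : ℕ) (w : ℝ) : ℝ :=
  |w| ^ ((l : ℝ) / 2 - 1 / 2) * besselK (1 / 2 - (l : ℝ) / 2) (|w| / 2) /
          (Real.sqrt Real.pi * 2 ^ l * Real.Gamma (l / 2))

lemma targetDens_even (l : ℕ) (w : ℝ) : targetDens l (-w) = targetDens l w := by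
  unfold targetDens
  rw [abs_neg]

lemma rhoE_even (l : ℕ) (w : ℝ) : rhoE l w = rhoE l (-w) := by
  unfold rhoE
  have hmeas : Measurable (fun x : ℝ => ENNReal.ofReal (chiDensity l (w+x)) * ENNReal.ofReal (chiDensity l x)) := by
    exact (((chiDensity_measurable l).comp (measurable_const_add w)).ennreal_ofReal).mul
      ((chiDensity_measurable l).ennreal_ofReal)
  have h := (measurePreserving_add_right volume (-w)).lintegral_comp hmeas
  rw [← h]
  apply lintegral_congr
  intro x
  rw [show w + (x + -w) = x by ring, show x + -w = -w + x by ring]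
  exact mul_comm _ _

/-- Main computation: the convolution density for positive `w`. -/
lemma rhoE_pos (l : ℕ) (hl : 0 < l) {w : ℝ} (hw : 0 < w) :
    rhoE l w = ENNReal.ofReal (targetDens l w) := by
  have hz2 : (0:ℝ) < w/2 := by positivity
  have hG : 0 < Real.Gamma ((l:ℝ)/2) := Real.Gamma_pos_of_pos (by positivity)
  have hDpos := Dl_pos l hl
  set F := fun y : ℝ => ENNReal.ofReal (chiDensity l (w+y)) * ENNReal.ofReal (chiDensity l y) with hF
  -- Step 1: restrict to `Ioi 0`
  have step1 : rhoE l w = ∫⁻ y in Ioi (0:ℝ), F y := by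
    unfold rhoE
    rw [← lintegral_indicator measurableSet_Ioi]
    apply lintegral_congr_ae
    have hnull : ∀ᵐ y : ℝ, y ≠ 0 := by
      rw [ae_iff]
      convert volume_singleton (a := (0:ℝ)) using 2
      ext y; simp
    filter_upwards [hnull] with y hy
    rcases lt_trichotomy y 0 with h | h | h
    · rw [indicator_of_notMem (by simpa using not_lt.2 h.le)]
      show ENNReal.ofReal (chiDensity l (w + y)) * ENNReal.ofReal (chiDensity l y) = 0
      rw [chiDensity_neg l h, ENNReal.ofReal_zero, mul_zero]
    · exact absurd h hy
    · rw [indicator_of_mem (mem_Ioi.2 h)]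
  -- Step 2: explicit integrand
  have step2 : (∫⁻ y in Ioi (0:ℝ), F y)
      = ∫⁻ y in Ioi (0:ℝ), ENNReal.ofReal
          (((w+y) ^ ((l:ℝ)/2 - 1) * y ^ ((l:ℝ)/2 - 1)) * Real.exp (-w/2 - y) / (Dl l)^2) := by
    apply setLIntegral_congr_fun_ae measurableSet_Ioi
    filter_upwards with y hy
    rw [hF]
    simp only
    rw [← ENNReal.ofReal_mul (chiDensity_nonneg l hl _), dens_prod l hw hy]
  -- Step 3: substitution
  have hderiv : ∀ t ∈ Ioi (0:ℝ), HasDerivWithinAt (fun t : ℝ => w/2 * (Real.cosh t - 1))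
      (w/2 * Real.sinh t) (Ioi 0) t := by
    intro t _
    exact (((Real.hasDerivAt_cosh t).sub_const 1).const_mul (w/2)).hasDerivWithinAt
  have step3 : (∫⁻ y in Ioi (0:ℝ), ENNReal.ofReal
          (((w+y) ^ ((l:ℝ)/2 - 1) * y ^ ((l:ℝ)/2 - 1)) * Real.exp (-w/2 - y) / (Dl l)^2))
      = ∫⁻ t in Ioi (0:ℝ), ENNReal.ofReal |w/2 * Real.sinh t| * ENNReal.ofReal
          (((w + w/2*(Real.cosh t - 1)) ^ ((l:ℝ)/2 - 1) * (w/2*(Real.cosh t - 1)) ^ ((l:ℝ)/2 - 1))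
            * Real.exp (-w/2 - w/2*(Real.cosh t - 1)) / (Dl l)^2) := by
    nth_rewrite 1 [← phi_image hw]
    exact lintegral_image_eq_lintegral_abs_deriv_mul' measurableSet_Ioi hderiv (phi_injOn hw)
      (fun y => ENNReal.ofReal
        (((w+y) ^ ((l:ℝ)/2 - 1) * y ^ ((l:ℝ)/2 - 1)) * Real.exp (-w/2 - y) / (Dl l)^2))
  -- Step 4: pointwise simplification
  have hcpos : (0:ℝ) < (w/2)^((l:ℝ)-1)/(Dl l)^2 :=
    div_pos (Real.rpow_pos_of_pos hz2 _) (pow_pos hDpos 2)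
  have step4 : (∫⁻ t in Ioi (0:ℝ), ENNReal.ofReal |w/2 * Real.sinh t| * ENNReal.ofReal
          (((w + w/2*(Real.cosh t - 1)) ^ ((l:ℝ)/2 - 1) * (w/2*(Real.cosh t - 1)) ^ ((l:ℝ)/2 - 1))
            * Real.exp (-w/2 - w/2*(Real.cosh t - 1)) / (Dl l)^2))
      = ∫⁻ t in Ioi (0:ℝ), ENNReal.ofReal ((w/2)^((l:ℝ)-1)/(Dl l)^2) * ENNReal.ofReal
          (Real.exp (-(w/2) * Real.cosh t) * Real.sinh t ^ (l-1 : ℕ)) := by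
    apply setLIntegral_congr_fun_ae measurableSet_Ioi
    filter_upwards with t ht
    have hs : 0 < Real.sinh t := Real.sinh_pos_iff.2 ht
    rw [abs_of_pos (by positivity : (0:ℝ) < w/2 * Real.sinh t),
      ← ENNReal.ofReal_mul (by positivity : (0:ℝ) ≤ w/2 * Real.sinh t),
      subst_pointwise l hl hw ht,
      ENNReal.ofReal_mul hcpos.le]
  -- Step 5: pull out constant and convert to a Bochner integral
  have step5 : (∫⁻ t in Ioi (0:ℝ), ENNReal.ofReal ((w/2)^((l:ℝ)-1)/(Dl l)^2) * ENNReal.ofReal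
          (Real.exp (-(w/2) * Real.cosh t) * Real.sinh t ^ (l-1 : ℕ)))
      = ENNReal.ofReal (((w/2)^((l:ℝ)-1)/(Dl l)^2) * SI (w/2) (l-1)) := by
    rw [lintegral_const_mul' _ _ ENNReal.ofReal_ne_top,
      ← ofReal_integral_eq_lintegral_ofReal (intS (w/2) hz2 (l-1))
        (by filter_upwards [ae_restrict_mem measurableSet_Ioi] with t ht
            have hs0 : (0:ℝ) ≤ Real.sinh t := (Real.sinh_pos_iff.2 ht).le
            positivity),
      ← ENNReal.ofReal_mul hcpos.le]
    rfl
  rw [step1, step2, step3, step4, step5]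
  -- Step 6: final real algebra via claim A
  congr 1
  have hclaim := claimA (l-1) (w/2) hz2
  have hcast : ((l-1:ℕ):ℝ) = (l:ℝ) - 1 := by rw [Nat.cast_sub hl]; norm_num
  rw [hcast, show ((l:ℝ)-1+1)/2 = (l:ℝ)/2 by ring, show w/2/2 = w/4 by ring,
    show ((l:ℝ)-1)/2 = (l:ℝ)/2-1/2 by ring] at hclaim
  have hA : (0:ℝ) < (w/4) ^ ((l:ℝ)/2-1/2) := Real.rpow_pos_of_pos (by positivity) _
  have hSI : SI (w/2) (l-1) = Real.Gamma ((l:ℝ)/2) * besselK ((l:ℝ)/2-1/2) (w/2)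
      / (Real.sqrt π * (w/4) ^ ((l:ℝ)/2-1/2)) := by
    rw [eq_div_iff (by positivity)]
    linear_combination hclaim
  have hsplit : w ^ ((l:ℝ)/2-1/2) * (w/4) ^ ((l:ℝ)/2-1/2) = (w/2) ^ ((l:ℝ)-1) := by
    rw [← Real.mul_rpow hw.le (by positivity), show w*(w/4) = (w/2)*(w/2) by ring,
      Real.mul_rpow (by positivity) (by positivity), ← Real.rpow_add (by positivity),
      show (l:ℝ)/2-1/2 + ((l:ℝ)/2-1/2) = (l:ℝ)-1 by ring]
  have hD2 : (Dl l)^2 = 2^(l:ℕ) * Real.Gamma ((l:ℝ)/2)^2 := by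
    unfold Dl
    rw [mul_pow, pow_two, ← Real.rpow_add (by norm_num : (0:ℝ) < 2),
      show (l:ℝ)/2 + (l:ℝ)/2 = (l:ℝ) by ring, Real.rpow_natCast]
  have hbK : besselK (1/2 - (l:ℝ)/2) (|w|/2) = besselK ((l:ℝ)/2-1/2) (w/2) := by
    rw [abs_of_pos hw, show (1:ℝ)/2 - (l:ℝ)/2 = -((l:ℝ)/2-1/2) by ring, besselK_neg]
  have hw' : w ^ ((l:ℝ)/2-1/2) = (w/2)^((l:ℝ)-1) / (w/4)^((l:ℝ)/2-1/2) := by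
    rw [eq_div_iff hA.ne']; exact hsplit
  have h2l : (0:ℝ) < 2^(l:ℕ) := by positivity
  have hsπ : (0:ℝ) < Real.sqrt π := Real.sqrt_pos.2 pi_pos
  unfold targetDens
  rw [hbK, hSI, hD2, abs_of_pos hw, hw']
  field_simp

end rhoE

section assembly

lemma chiSq_eq_withDensity (l : ℕ) :
    chiSq l = volume.withDensity (fun x => ENNReal.ofReal (chiDensity l x)) := rfl

lemma prod_withDensity_eq (l : ℕ) [SigmaFinite (volume.withDensity (fun x => ENNReal.ofReal (chiDensity l x)))] :
    (volume.withDensity (fun x => ENNReal.ofReal (chiDensity l x))).prod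
      (volume.withDensity (fun x => ENNReal.ofReal (chiDensity l x)))
    = (volume.prod volume).withDensity
        (fun p : ℝ × ℝ => ENNReal.ofReal (chiDensity l p.1) * ENNReal.ofReal (chiDensity l p.2)) := by
  have hFe : Measurable (fun x => ENNReal.ofReal (chiDensity l x)) :=
    (chiDensity_measurable l).ennreal_ofReal
  apply Measure.prod_eq
  intro s t hs ht
  rw [withDensity_apply _ (hs.prod ht), ← Measure.prod_restrict,
    lintegral_prod_mul (f := fun x => ENNReal.ofReal (chiDensity l x))
      (g := fun x => ENNReal.ofReal (chiDensity l x)) hFe.aemeasurable hFe.aemeasurable,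
    withDensity_apply _ hs, withDensity_apply _ ht]

lemma map_sub_withDensity (l : ℕ) (hl : 0 < l) :
    Measure.map (fun p : ℝ × ℝ => p.1 - p.2) ((volume.prod volume).withDensity
        (fun p : ℝ × ℝ => ENNReal.ofReal (chiDensity l p.1) * ENNReal.ofReal (chiDensity l p.2)))
      = volume.withDensity (rhoE l) := by
  have hFe : Measurable (fun x => ENNReal.ofReal (chiDensity l x)) :=
    (chiDensity_measurable l).ennreal_ofReal
  have hG : Measurable (fun p : ℝ × ℝ => ENNReal.ofReal (chiDensity l p.1) * ENNReal.ofReal (chiDensity l p.2)) :=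
    (hFe.comp measurable_fst).mul (hFe.comp measurable_snd)
  ext s hs
  rw [Measure.map_apply (measurable_fst.fun_sub measurable_snd) hs,
    withDensity_apply _ ((measurable_fst.fun_sub measurable_snd) hs),
    withDensity_apply _ hs]
  have hK : Measurable (fun q : ℝ × ℝ => s.indicator (1 : ℝ → ℝ≥0∞) q.1
      * (ENNReal.ofReal (chiDensity l (q.1 + q.2)) * ENNReal.ofReal (chiDensity l q.2))) := by
    apply Measurable.mul
    · exact ((measurable_one.indicator hs).comp measurable_fst)
    · exact ((hFe.comp (measurable_fst.add measurable_snd)).mul (hFe.comp measurable_snd))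
  have hmp := (measurePreserving_sub_prod (volume : Measure ℝ) volume).lintegral_comp hK
  calc ∫⁻ p in (fun p : ℝ × ℝ => p.1 - p.2) ⁻¹' s,
        ENNReal.ofReal (chiDensity l p.1) * ENNReal.ofReal (chiDensity l p.2) ∂(volume.prod volume)
      = ∫⁻ p : ℝ × ℝ, s.indicator (1 : ℝ → ℝ≥0∞) (p.1 - p.2)
          * (ENNReal.ofReal (chiDensity l p.1) * ENNReal.ofReal (chiDensity l p.2)) ∂(volume.prod volume) := by
        rw [← lintegral_indicator (measurable_fst.fun_sub measurable_snd hs)]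
        apply lintegral_congr
        intro p
        by_cases hp : p.1 - p.2 ∈ s
        · simp [Set.indicator_apply, Set.mem_preimage, hp]
        · simp [Set.indicator_apply, Set.mem_preimage, hp]
    _ = ∫⁻ q : ℝ × ℝ, s.indicator (1 : ℝ → ℝ≥0∞) q.1
          * (ENNReal.ofReal (chiDensity l (q.1 + q.2)) * ENNReal.ofReal (chiDensity l q.2)) ∂(volume.prod volume) := by
        rw [← hmp]
        apply lintegral_congr
        intro p
        simp only
        rw [show p.1 - p.2 + p.2 = p.1 by ring]
    _ = ∫⁻ u : ℝ, ∫⁻ v : ℝ, s.indicator (1 : ℝ → ℝ≥0∞) u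
          * (ENNReal.ofReal (chiDensity l (u + v)) * ENNReal.ofReal (chiDensity l v)) ∂volume ∂volume := by
        exact lintegral_prod _ hK.aemeasurable
    _ = ∫⁻ u : ℝ, s.indicator (1 : ℝ → ℝ≥0∞) u * rhoE l u ∂volume := by
        apply lintegral_congr
        intro u
        rw [lintegral_const_mul' _ _ (by
          by_cases hu : u ∈ s
          · rw [indicator_of_mem hu]; exact ENNReal.one_ne_top
          · rw [indicator_of_notMem hu]; exact ENNReal.zero_ne_top)]
        rfl
    _ = ∫⁻ u in s, rhoE l u ∂volume := by
        rw [← lintegral_indicator hs]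
        apply lintegral_congr
        intro u
        by_cases hu : u ∈ s
        · simp [Set.indicator_apply, hu]
        · simp [Set.indicator_apply, hu]

end assembly

theorem chiSq_diff_density {Ω : Type*} [MeasurableSpace Ω] (μ : Measure Ω)
    [IsProbabilityMeasure μ] (l : ℕ) (hl : 0 < l) (X₁ X₂ : Ω → ℝ)
    (hmeas₁ : Measurable X₁) (hmeas₂ : Measurable X₂)
    (hindep : IndepFun X₁ X₂ μ)
    (h₁ : Measure.map X₁ μ = chiSq l) (h₂ : Measure.map X₂ μ = chiSq l) :
    Measure.map (fun ω => X₁ ω - X₂ ω) μ =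
      MeasureTheory.volume.withDensity fun w =>
        ENNReal.ofReal (|w| ^ ((l : ℝ) / 2 - 1 / 2) * besselK (1 / 2 - (l : ℝ) / 2) (|w| / 2) /
          (Real.sqrt Real.pi * 2 ^ l * Real.Gamma (l / 2))) := by
  haveI hprob : IsProbabilityMeasure (chiSq l) := by
    rw [← h₁]; exact Measure.isProbabilityMeasure_map hmeas₁.aemeasurable
  haveI hSF : SigmaFinite (volume.withDensity (fun x => ENNReal.ofReal (chiDensity l x))) := by
    rw [← chiSq_eq_withDensity]; infer_instance
  have hpair := (ProbabilityTheory.indepFun_iff_map_prod_eq_prod_map_map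
    hmeas₁.aemeasurable hmeas₂.aemeasurable).1 hindep
  rw [h₁, h₂] at hpair
  have hcomp : (fun ω => X₁ ω - X₂ ω)
      = (fun p : ℝ × ℝ => p.1 - p.2) ∘ (fun ω => (X₁ ω, X₂ ω)) := rfl
  rw [hcomp, ← Measure.map_map (measurable_fst.fun_sub measurable_snd) (hmeas₁.prodMk hmeas₂),
    hpair, chiSq_eq_withDensity, prod_withDensity_eq l, map_sub_withDensity l hl]
  have hae : rhoE l =ᵐ[volume] (fun w => ENNReal.ofReal (targetDens l w)) := by
    have hnull : ∀ᵐ w : ℝ, w ≠ 0 := by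
      rw [ae_iff]
      convert volume_singleton (a := (0:ℝ)) using 2
      ext y; simp
    filter_upwards [hnull] with w hw
    rcases lt_trichotomy w 0 with h | h | h
    · rw [rhoE_even l w, rhoE_pos l hl (by linarith : (0:ℝ) < -w), targetDens_even]
    · exact absurd h hw
    · exact rhoE_pos l hl h
  exact withDensity_congr_ae hae
end besselrec
end
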